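/- arXiv:1307.2834 — 6 statements merged into one kernel-verified Lean document; each statement's English description precedes it below -/
import Mathlib

section
/- Let s < 0 be a real number and let N > 2 be an integer. Then the second discrete derivative of the minimal average standardized Riesz pair-energy satisfies the two-sided bound: (2/((N+1)(N-2)))·(v_s(N) + 1/s) ≤ v_s(N-1) - 2·v_s(N) + v_s(N+1) ≤ -(2/((N+1)N))·(v_s(N) + 1/s). -/
open scoped BigOperators

/-- The standardized Riesz pair-energy `V_s(r) = (r^{-s} - 1)/s` for `s ≠ 0`,
and `V_0(r) = -log r`. -/
noncomputable def Vpair (s r : ℝ) : ℝ := if s = 0 then -Real.log r else (r ^ (-s) - 1) / s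

/-- The average standardized Riesz pair-energy of an `N`-point configuration on the
unit sphere `S² ⊂ ℝ³`. -/
noncomputable def avgE (s : ℝ) (N : ℕ) (q : Fin N → EuclideanSpace ℝ (Fin 3)) : ℝ :=
  2 / ((N : ℝ) * ((N : ℝ) - 1)) *
    ∑ i : Fin N, ∑ j : Fin N, if i < j then Vpair s ‖q i - q j‖ else 0

/-- The minimal average standardized Riesz pair-energy `v_s(N)`: the infimum of the
average pair-energy over all configurations of `N` pairwise distinct points on `S²`. -/
noncomputable def vmin (s : ℝ) (N : ℕ) : ℝ :=
  sInf { E : ℝ | ∃ q : Fin N → EuclideanSpace ℝ (Fin 3),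
    (∀ i, ‖q i‖ = 1) ∧ Function.Injective q ∧ E = avgE s N q }

open scoped RealInnerProductSpace

abbrev E3 := EuclideanSpace ℝ (Fin 3)

noncomputable def gE (s r : ℝ) : ℝ := r ^ (-s) / s

noncomputable def totU (s : ℝ) {n : ℕ} (q : Fin n → E3) : ℝ :=
  ∑ i : Fin n, ∑ j : Fin n, if i < j then gE s ‖q i - q j‖ else 0

def confSet (s : ℝ) (n : ℕ) : Set ℝ :=
  { t | ∃ q : Fin n → E3, (∀ i, ‖q i‖ = 1) ∧ Function.Injective q ∧ t = totU s q }

noncomputable def TU (s : ℝ) (n : ℕ) : ℝ := sInf (confSet s n)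

lemma gE_zero {s : ℝ} (hs : s < 0) : gE s 0 = 0 := by
  simp [gE, Real.zero_rpow (by linarith : -s ≠ 0)]

lemma gE_nonpos {s : ℝ} (hs : s < 0) {r : ℝ} (hr : 0 ≤ r) : gE s r ≤ 0 :=
  div_nonpos_of_nonneg_of_nonpos (Real.rpow_nonneg hr _) hs.le

lemma gE_lb {s : ℝ} (hs : s < 0) {r : ℝ} (hr : 0 ≤ r) (hr2 : r ≤ 2) :
    (2:ℝ) ^ (-s) / s ≤ gE s r := by
  have h := Real.rpow_le_rpow hr hr2 (by linarith : (0:ℝ) ≤ -s)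
  rw [gE, div_eq_mul_inv, div_eq_mul_inv]
  exact mul_le_mul_of_nonpos_right h (inv_nonpos.2 hs.le)

lemma gE_cont {s : ℝ} (hs : s < 0) : Continuous (gE s) := by
  unfold gE
  apply Continuous.div_const
  rw [continuous_iff_continuousAt]
  exact fun x => Real.continuousAt_rpow_const x (-s) (Or.inr (by linarith))

lemma totU_nonpos {s : ℝ} (hs : s < 0) {n : ℕ} (q : Fin n → E3) : totU s q ≤ 0 := by
  apply Finset.sum_nonpos; intro i _
  apply Finset.sum_nonpos; intro j _
  split
  · exact gE_nonpos hs (norm_nonneg _)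
  · exact le_refl 0
lemma totU_lb {s : ℝ} (hs : s < 0) {n : ℕ} (q : Fin n → E3) (hq : ∀ i, ‖q i‖ = 1) :
    (n:ℝ) * n * ((2:ℝ) ^ (-s) / s) ≤ totU s q := by
  have hB0 : (2:ℝ) ^ (-s) / s ≤ 0 :=
    div_nonpos_of_nonneg_of_nonpos (Real.rpow_nonneg (by norm_num) _) hs.le
  have h1 : ∀ i j : Fin n, (2:ℝ) ^ (-s) / s ≤ (if i < j then gE s ‖q i - q j‖ else 0) := by
    intro i j
    split
    · refine gE_lb hs (norm_nonneg _) ?_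
      calc ‖q i - q j‖ ≤ ‖q i‖ + ‖q j‖ := norm_sub_le _ _
        _ = 2 := by rw [hq i, hq j]; norm_num
    · exact hB0
  calc (n:ℝ) * n * ((2:ℝ) ^ (-s) / s)
      = ∑ _i : Fin n, ∑ _j : Fin n, ((2:ℝ) ^ (-s) / s) := by
        simp [Finset.sum_const, Finset.card_univ, nsmul_eq_mul]; ring
    _ ≤ totU s q := by
        apply Finset.sum_le_sum; intro i _
        exact Finset.sum_le_sum fun j _ => h1 i j

lemma confSet_bddBelow {s : ℝ} (hs : s < 0) (n : ℕ) : BddBelow (confSet s n) := by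
  refine ⟨(n:ℝ) * n * ((2:ℝ) ^ (-s) / s), ?_⟩
  rintro t ⟨q, hq, -, rfl⟩
  exact totU_lb hs q hq

/-! ### Curves on the sphere -/

noncomputable def curveP (x w : E3) (t : ℝ) : E3 := Real.cos t • x + Real.sin t • w

lemma curveP_zero (x w : E3) : curveP x w 0 = x := by simp [curveP]

lemma curveP_norm {x w : E3} (hx : ‖x‖ = 1) (hw : ‖w‖ = 1) (hxw : ⟪x, w⟫ = 0) (t : ℝ) :
    ‖curveP x w t‖ = 1 := by
  have h2 : ‖curveP x w t‖ ^ 2 = 1 := by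
    rw [curveP, norm_add_sq_real]
    rw [real_inner_smul_left, real_inner_smul_right, hxw]
    rw [norm_smul, norm_smul, hx, hw]
    simp [mul_pow, sq_abs, Real.cos_sq_add_sin_sq]
  have h3 : ‖curveP x w t‖ = Real.sqrt (‖curveP x w t‖ ^ 2) :=
    (Real.sqrt_sq (norm_nonneg _)).symm
  rw [h3, h2, Real.sqrt_one]

lemma curveP_inner {x w : E3} (hw : ‖w‖ = 1) (hxw : ⟪x, w⟫ = 0) (t : ℝ) :
    ⟪curveP x w t, w⟫ = Real.sin t := by
  rw [curveP, inner_add_left, real_inner_smul_left, real_inner_smul_left, hxw,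
    real_inner_self_eq_norm_sq, hw]
  ring

lemma curveP_cont (x w : E3) : Continuous (curveP x w) := by
  unfold curveP
  exact ((Real.continuous_cos.smul continuous_const).add
    (Real.continuous_sin.smul continuous_const))

lemma curveP_injOn {x w : E3} (hw : ‖w‖ = 1) (hxw : ⟪x, w⟫ = 0) :
    Set.InjOn (curveP x w) (Set.Icc (-(Real.pi/2)) (Real.pi/2)) := by
  intro t1 h1 t2 h2 heq
  have := congrArg (fun v => ⟪v, w⟫) heq
  simp only [curveP_inner hw hxw] at this
  exact Real.injOn_sin h1 h2 this

lemma exists_ortho (x : E3) (hx : ‖x‖ = 1) : ∃ w : E3, ‖w‖ = 1 ∧ ⟪x, w⟫ = 0 := by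
  have hxne : x ≠ 0 := by intro h; rw [h, norm_zero] at hx; norm_num at hx
  have hrk : Module.finrank ℝ ((ℝ ∙ x)ᗮ : Submodule ℝ E3) = 2 := by
    have h := Submodule.finrank_add_finrank_orthogonal (𝕜 := ℝ) (ℝ ∙ x)
    rw [finrank_span_singleton hxne, finrank_euclideanSpace_fin] at h
    omega
  have hne : ((ℝ ∙ x)ᗮ : Submodule ℝ E3) ≠ ⊥ := by
    intro h; rw [h, finrank_bot] at hrk; omega
  obtain ⟨w', hw'K, hw'0⟩ := Submodule.exists_mem_ne_zero_of_ne_bot hne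
  refine ⟨‖w'‖⁻¹ • w', norm_smul_inv_norm hw'0, ?_⟩
  rw [real_inner_smul_right]
  have : ⟪x, w'⟫ = 0 :=
    (Submodule.mem_orthogonal _ _).1 hw'K x (Submodule.mem_span_singleton_self x)
  rw [this, mul_zero]

lemma sphere_pert (x : E3) (hx : ‖x‖ = 1) (A : Finset E3) {δ : ℝ} (hδ : 0 < δ) :
    ∃ y : E3, ‖y‖ = 1 ∧ y ∉ A ∧ ‖y - x‖ < δ := by
  obtain ⟨w, hw, hxw⟩ := exists_ortho x hx
  have hc : ContinuousAt (curveP x w) 0 := (curveP_cont x w).continuousAt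
  rw [Metric.continuousAt_iff] at hc
  obtain ⟨δt, hδt, hball⟩ := hc δ hδ
  set b : ℝ := min δt (Real.pi/2) with hb
  have hb0 : 0 < b := lt_min hδt Real.pi_div_two_pos
  have hI : Set.Ioo (0:ℝ) b ⊆ Set.Icc (-(Real.pi/2)) (Real.pi/2) := by
    intro t ht
    constructor
    · linarith [ht.1, Real.pi_div_two_pos]
    · exact le_trans ht.2.le (min_le_right _ _)
  have hinf : (Set.Ioo (0:ℝ) b).Infinite := Set.infinite_coe_iff.1 (Set.Ioo.infinite hb0)
  have himg : ((curveP x w) '' (Set.Ioo 0 b)).Infinite :=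
    hinf.image (((curveP_injOn hw hxw)).mono hI)
  obtain ⟨y, hy, hyA⟩ := himg.exists_notMem_finset A
  obtain ⟨t, ht, rfl⟩ := hy
  refine ⟨curveP x w t, curveP_norm hx hw hxw t, hyA, ?_⟩
  have : dist t 0 < δt := by
    rw [Real.dist_eq, sub_zero, abs_of_pos ht.1]
    exact lt_of_lt_of_le ht.2 (min_le_left _ _) |>.trans_le (le_refl _)
  have h2 := hball this
  rw [curveP_zero] at h2
  rw [← dist_eq_norm]
  exact h2

/-! ### Existence of injective configurations -/

lemma confSet_nonempty (s : ℝ) (n : ℕ) : (confSet s n).Nonempty := by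
  have hx : ‖(EuclideanSpace.single 0 (1:ℝ) : E3)‖ = 1 := by
    rw [EuclideanSpace.norm_single]; norm_num
  obtain ⟨w, hw, hxw⟩ := exists_ortho _ hx
  set x : E3 := EuclideanSpace.single 0 (1:ℝ)
  set tf : Fin n → ℝ := fun k => ((k:ℝ) + 1)⁻¹ with htf
  have htmem : ∀ k, tf k ∈ Set.Icc (-(Real.pi/2)) (Real.pi/2) := by
    intro k
    have h1 : (0:ℝ) < (k:ℝ) + 1 := by positivity
    have h2 : (0:ℝ) < tf k := by positivity
    have h3 : tf k ≤ 1 := by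
      rw [htf]
      rw [inv_le_one_iff₀]
      right; exact le_add_of_nonneg_left (by positivity)
    have hpi : (1:ℝ) ≤ Real.pi/2 := by
      have := Real.pi_gt_three; linarith
    exact ⟨by linarith [Real.pi_div_two_pos], by linarith⟩
  have htinj : Function.Injective tf := by
    intro k l h
    simp only [htf] at h
    have h2 := inv_injective h
    have h3 : ((k:ℕ):ℝ) = ((l:ℕ):ℝ) := by linarith
    exact Fin.ext (Nat.cast_injective h3)
  refine ⟨totU s (fun k => curveP x w (tf k)), fun k => curveP x w (tf k), ?_, ?_, rfl⟩
  · exact fun k => curveP_norm hx hw hxw _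
  · intro k l h
    exact htinj (curveP_injOn hw hxw (htmem k) (htmem l) h)

lemma TU_le {s : ℝ} (hs : s < 0) {n : ℕ} {t : ℝ} (ht : t ∈ confSet s n) : TU s n ≤ t :=
  csInf_le (confSet_bddBelow hs n) ht

lemma TU_nonpos {s : ℝ} (hs : s < 0) (n : ℕ) : TU s n ≤ 0 := by
  obtain ⟨t, ht⟩ := confSet_nonempty s n
  obtain ⟨q, hq, hinj, rfl⟩ := ht
  exact le_trans (TU_le hs ⟨q, hq, hinj, rfl⟩) (totU_nonpos hs q)

/-! ### Deletion lemma -/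

lemma delete_exists (s : ℝ) {n : ℕ} (q : Fin (n+1) → E3) :
    ∃ k : Fin (n+1), totU s (q ∘ k.succAbove) ≤ (((n:ℝ) - 1)/((n:ℝ) + 1)) * totU s q := by
  set F : Fin (n+1) → Fin (n+1) → ℝ :=
    fun a b => if a < b then gE s ‖q a - q b‖ else 0 with hF
  have hFdiag : ∀ a, F a a = 0 := by intro a; simp [hF]
  have htot : totU s q = ∑ a, ∑ b, F a b := rfl
  have hdel : ∀ k, totU s (q ∘ k.succAbove)
      = totU s q - (∑ b, F k b) - (∑ a, F a k) := by
    intro k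
    have h1 : totU s (q ∘ k.succAbove)
        = ∑ i : Fin n, ∑ j : Fin n, F (k.succAbove i) (k.succAbove j) := by
      apply Finset.sum_congr rfl; intro i _
      apply Finset.sum_congr rfl; intro j _
      simp only [Function.comp, hF, Fin.succAbove_lt_succAbove_iff]
    have h2 : ∀ i : Fin n, ∑ j : Fin n, F (k.succAbove i) (k.succAbove j)
        = (∑ b, F (k.succAbove i) b) - F (k.succAbove i) k := by
      intro i
      have := Fin.sum_univ_succAbove (fun b => F (k.succAbove i) b) k
      linarith
    have h3 : ∑ i : Fin n, (∑ b, F (k.succAbove i) b)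
        = (∑ a, ∑ b, F a b) - ∑ b, F k b := by
      have := Fin.sum_univ_succAbove (fun a => ∑ b, F a b) k
      linarith
    have h4 : ∑ i : Fin n, F (k.succAbove i) k = (∑ a, F a k) - F k k := by
      have := Fin.sum_univ_succAbove (fun a => F a k) k
      linarith
    rw [h1]
    rw [Finset.sum_congr rfl (fun i _ => h2 i), Finset.sum_sub_distrib, h3, h4,
      hFdiag k, htot]
    ring
  have hsum : ∑ k : Fin (n+1), totU s (q ∘ k.succAbove) = ((n:ℝ) - 1) * totU s q := by
    rw [Finset.sum_congr rfl (fun k _ => hdel k)]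
    rw [Finset.sum_sub_distrib, Finset.sum_sub_distrib]
    have hR : ∑ k, ∑ b, F k b = totU s q := htot.symm
    have hC : ∑ k, ∑ a, F a k = totU s q := by rw [Finset.sum_comm]; exact htot.symm
    rw [hR, hC, Finset.sum_const, Finset.card_univ, Fintype.card_fin, nsmul_eq_mul]
    push_cast; ring
  have hne : (Finset.univ : Finset (Fin (n+1))).Nonempty := Finset.univ_nonempty
  have hle : ∑ k : Fin (n+1), totU s (q ∘ k.succAbove)
      ≤ ∑ _k : Fin (n+1), (((n:ℝ) - 1)/((n:ℝ) + 1)) * totU s q := by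
    rw [hsum, Finset.sum_const, Finset.card_univ, Fintype.card_fin, nsmul_eq_mul]
    have hnn : ((n:ℝ) + 1) ≠ 0 := by positivity
    push_cast
    field_simp
    exact le_rfl
  obtain ⟨k, -, hk⟩ := Finset.exists_le_of_sum_le hne hle
  exact ⟨k, hk⟩

lemma TU_deletion {s : ℝ} (hs : s < 0) {n : ℕ} (hn : 2 ≤ n) :
    TU s n ≤ (((n:ℝ) - 1)/((n:ℝ) + 1)) * TU s (n+1) := by
  have hc : (0:ℝ) < ((n:ℝ) - 1)/((n:ℝ) + 1) := by
    apply div_pos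
    · have : (2:ℝ) ≤ (n:ℝ) := by exact_mod_cast hn
      linarith
    · positivity
  set c := ((n:ℝ) - 1)/((n:ℝ) + 1)
  have key : ∀ t ∈ confSet s (n+1), TU s n ≤ c * t := by
    rintro t ⟨q, hq, hinj, rfl⟩
    obtain ⟨k, hk⟩ := delete_exists s q
    have hmem : totU s (q ∘ k.succAbove) ∈ confSet s n :=
      ⟨q ∘ k.succAbove, fun i => hq _, hinj.comp (Fin.succAbove_right_injective), rfl⟩
    exact le_trans (TU_le hs hmem) hk
  have h2 : TU s n / c ≤ TU s (n+1) := by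
    apply le_csInf (confSet_nonempty s (n+1))
    intro t ht
    rw [div_le_iff₀ hc]
    rw [mul_comm]
    exact key t ht
  calc TU s n = (TU s n / c) * c := by field_simp
    _ ≤ TU s (n+1) * c := mul_le_mul_of_nonneg_right h2 hc.le
    _ = c * TU s (n+1) := mul_comm _ _

/-! ### Addition lemma -/

lemma cons_totU (s : ℝ) {n : ℕ} (q : Fin n → E3) (p : E3) :
    totU s (Fin.cons p q : Fin (n+1) → E3)
      = (∑ i : Fin n, gE s ‖p - q i‖) + totU s q := by
  unfold totU
  rw [Fin.sum_univ_succ]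
  congr 1
  · rw [Fin.sum_univ_succ]
    simp [Fin.cons_zero, Fin.cons_succ, Fin.succ_pos]
  · apply Finset.sum_congr rfl; intro i _
    rw [Fin.sum_univ_succ]
    simp [Fin.cons_zero, Fin.cons_succ, Fin.succ_lt_succ_iff, Fin.not_lt_zero]

lemma double_sum_eq (s : ℝ) {n : ℕ} (hs : s < 0) (q : Fin n → E3) :
    ∑ k : Fin n, ∑ i : Fin n, gE s ‖q k - q i‖ = 2 * totU s q := by
  have hpt : ∀ k i : Fin n, gE s ‖q k - q i‖
      = (if k < i then gE s ‖q k - q i‖ else 0) + (if i < k then gE s ‖q i - q k‖ else 0) := by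
    intro k i
    rcases lt_trichotomy k i with h | h | h
    · simp [h, not_lt_of_gt h, asymm h]
    · subst h; simp [lt_irrefl, gE_zero hs]
    · rw [if_neg (asymm h), if_pos h, norm_sub_rev]
      simp
  calc ∑ k : Fin n, ∑ i : Fin n, gE s ‖q k - q i‖
      = ∑ k : Fin n, ∑ i : Fin n,
          ((if k < i then gE s ‖q k - q i‖ else 0) + (if i < k then gE s ‖q i - q k‖ else 0)) := by
        exact Finset.sum_congr rfl fun k _ => Finset.sum_congr rfl fun i _ => hpt k i
    _ = totU s q + ∑ k : Fin n, ∑ i : Fin n, (if i < k then gE s ‖q i - q k‖ else 0) := by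
        simp only [Finset.sum_add_distrib]
        rfl
    _ = totU s q + totU s q := by rw [Finset.sum_comm]; rfl
    _ = 2 * totU s q := by ring

lemma TU_addition {s : ℝ} (hs : s < 0) {n : ℕ} (hn : 2 ≤ n) :
    TU s (n+1) ≤ (((n:ℝ) + 2)/(n:ℝ)) * TU s n := by
  have hn0 : (0:ℝ) < (n:ℝ) := by
    have : (2:ℝ) ≤ (n:ℝ) := by exact_mod_cast hn
    linarith
  have hc : (0:ℝ) < ((n:ℝ) + 2)/(n:ℝ) := by positivity
  set c := ((n:ℝ) + 2)/(n:ℝ) with hcdef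
  have key : ∀ t ∈ confSet s n, TU s (n+1) ≤ c * t := by
    rintro t ⟨q, hq, hinj, rfl⟩
    classical
    apply le_of_forall_pos_le_add
    intro ε hε
    -- choose the point with smallest interaction sum
    have hsumB : ∑ k : Fin n, ∑ i : Fin n, gE s ‖q k - q i‖ = 2 * totU s q :=
      double_sum_eq s hs q
    have hex : ∃ k : Fin n, ∑ i : Fin n, gE s ‖q k - q i‖ ≤ 2 * totU s q / n := by
      have hne : (Finset.univ : Finset (Fin n)).Nonempty :=
        Finset.univ_nonempty_iff.2 (Fin.pos_iff_nonempty.1 (by omega))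
      have hle : ∑ k : Fin n, ∑ i : Fin n, gE s ‖q k - q i‖
          ≤ ∑ _k : Fin n, (2 * totU s q / n) := by
        rw [hsumB, Finset.sum_const, Finset.card_univ, Fintype.card_fin, nsmul_eq_mul]
        field_simp
        exact le_rfl
      obtain ⟨k, -, hk⟩ := Finset.exists_le_of_sum_le hne hle
      exact ⟨k, hk⟩
    obtain ⟨k, hk⟩ := hex
    -- continuity of the interaction sum
    have hφ : Continuous (fun p : E3 => ∑ i : Fin n, gE s ‖p - q i‖) := by
      apply continuous_finset_sum
      intro i _
      exact (gE_cont hs).comp ((continuous_id.sub continuous_const).norm)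
    have hca : ContinuousAt (fun p : E3 => ∑ i : Fin n, gE s ‖p - q i‖) (q k) :=
      hφ.continuousAt
    rw [Metric.continuousAt_iff] at hca
    obtain ⟨δ, hδ, hball⟩ := hca ε hε
    -- perturbed point
    obtain ⟨p, hp1, hpA, hpδ⟩ := sphere_pert (q k) (hq k) (Finset.image q Finset.univ) hδ
    have hpR : p ∉ Set.range q := by
      intro ⟨i, hi⟩
      exact hpA (Finset.mem_image.2 ⟨i, Finset.mem_univ i, hi⟩)
    set q' : Fin (n+1) → E3 := Fin.cons p q with hq'
    have hinj' : Function.Injective q' := Fin.cons_injective_iff.mpr ⟨hpR, hinj⟩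
    have hsph' : ∀ i : Fin (n+1), ‖q' i‖ = 1 := by
      intro i
      refine Fin.cases ?_ ?_ i
      · simpa [hq'] using hp1
      · intro j; simpa [hq'] using hq j
    have hmem : totU s q' ∈ confSet s (n+1) := ⟨q', hsph', hinj', rfl⟩
    have h5 : totU s q' = (∑ i : Fin n, gE s ‖p - q i‖) + totU s q := cons_totU s q p
    have h7 : ∑ i : Fin n, gE s ‖p - q i‖ ≤ (∑ i : Fin n, gE s ‖q k - q i‖) + ε := by
      have hd : dist p (q k) < δ := by rw [dist_eq_norm]; exact hpδ
      have := hball hd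
      rw [Real.dist_eq, abs_sub_lt_iff] at this
      linarith [this.1]
    calc TU s (n+1) ≤ totU s q' := TU_le hs hmem
      _ = (∑ i : Fin n, gE s ‖p - q i‖) + totU s q := h5
      _ ≤ ((∑ i : Fin n, gE s ‖q k - q i‖) + ε) + totU s q := by linarith
      _ ≤ (2 * totU s q / n + ε) + totU s q := by linarith
      _ = c * totU s q + ε := by rw [hcdef]; field_simp; ring
  have h2 : TU s (n+1) / c ≤ TU s n := by
    apply le_csInf (confSet_nonempty s n)
    intro t ht
    rw [div_le_iff₀ hc, mul_comm]
    exact key t ht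
  calc TU s (n+1) = (TU s (n+1) / c) * c := by field_simp
    _ ≤ TU s n * c := mul_le_mul_of_nonneg_right h2 hc.le
    _ = c * TU s n := mul_comm _ _

/-! ### Relation between `vmin` and `TU` -/

lemma count_pairs (n : ℕ) :
    ∑ i : Fin n, ∑ j : Fin n, (if i < j then (1:ℝ) else 0) = n * (n - 1) / 2 := by
  have h : ∑ i : Fin n, ∑ j : Fin n,
      ((if i < j then (1:ℝ) else 0) + (if j < i then 1 else 0) + (if i = j then 1 else 0))
      = (n:ℝ) * n := by
    have hpt : ∀ i j : Fin n,
        ((if i < j then (1:ℝ) else 0) + (if j < i then 1 else 0) + (if i = j then 1 else 0)) = 1 := by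
      intro i j
      rcases lt_trichotomy i j with h | h | h
      · simp [h, asymm h, ne_of_lt h]
      · simp [h, lt_irrefl]
      · simp [h, asymm h, (ne_of_lt h).symm]
    rw [Finset.sum_congr rfl fun i _ => Finset.sum_congr rfl fun j _ => hpt i j]
    simp [Finset.sum_const, Finset.card_univ]
  have hsym : ∑ i : Fin n, ∑ j : Fin n, (if j < i then (1:ℝ) else 0)
      = ∑ i : Fin n, ∑ j : Fin n, (if i < j then (1:ℝ) else 0) := Finset.sum_comm
  have hdiag : ∑ i : Fin n, ∑ j : Fin n, (if i = j then (1:ℝ) else 0) = n := by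
    simp [Finset.sum_ite_eq, Finset.card_univ]
  simp only [Finset.sum_add_distrib] at h
  rw [hsym, hdiag] at h
  linarith

lemma avgE_eq {s : ℝ} (hs : s < 0) {n : ℕ} (hn : 2 ≤ n) (q : Fin n → E3) :
    avgE s n q = 2 / ((n:ℝ) * ((n:ℝ) - 1)) * totU s q - 1/s := by
  have hsne : s ≠ 0 := hs.ne
  have hnn : ((n:ℝ) * ((n:ℝ) - 1)) ≠ 0 := by
    have : (2:ℝ) ≤ (n:ℝ) := by exact_mod_cast hn
    nlinarith
  have hV : ∀ i j : Fin n, (if i < j then Vpair s ‖q i - q j‖ else 0)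
      = (if i < j then gE s ‖q i - q j‖ else 0) - (1/s) * (if i < j then (1:ℝ) else 0) := by
    intro i j
    split
    · rw [Vpair, if_neg hsne, gE]; ring
    · ring
  rw [avgE]
  rw [Finset.sum_congr rfl fun i _ => Finset.sum_congr rfl fun j _ => hV i j]
  simp only [Finset.sum_sub_distrib, ← Finset.mul_sum]
  rw [count_pairs n]
  have : totU s q = ∑ i : Fin n, ∑ j : Fin n, (if i < j then gE s ‖q i - q j‖ else 0) := rfl
  rw [← this]
  have hn1 : (n:ℝ) - 1 ≠ 0 := by
    have : (2:ℝ) ≤ (n:ℝ) := by exact_mod_cast hn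
    linarith
  field_simp

lemma vmin_eq {s : ℝ} (hs : s < 0) {n : ℕ} (hn : 2 ≤ n) :
    vmin s n = 2 / ((n:ℝ) * ((n:ℝ) - 1)) * TU s n - 1/s := by
  have hnpos : (0:ℝ) < (n:ℝ) * ((n:ℝ) - 1) := by
    have : (2:ℝ) ≤ (n:ℝ) := by exact_mod_cast hn
    nlinarith
  set c := 2 / ((n:ℝ) * ((n:ℝ) - 1)) with hcdef
  have hc : 0 < c := by positivity
  have hset : { E : ℝ | ∃ q : Fin n → EuclideanSpace ℝ (Fin 3),
      (∀ i, ‖q i‖ = 1) ∧ Function.Injective q ∧ E = avgE s n q }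
      = (fun t => c * t - 1/s) '' confSet s n := by
    ext E
    constructor
    · rintro ⟨q, h1, h2, rfl⟩
      exact ⟨totU s q, ⟨q, h1, h2, rfl⟩, (avgE_eq hs hn q).symm⟩
    · rintro ⟨t, ⟨q, h1, h2, rfl⟩, rfl⟩
      exact ⟨q, h1, h2, (avgE_eq hs hn q).symm⟩
  have hmono : Monotone (fun t : ℝ => c * t - 1/s) := by
    intro a b hab
    simp only
    have := mul_le_mul_of_nonneg_left hab hc.le
    linarith
  have hcont : ContinuousAt (fun t : ℝ => c * t - 1/s) (sInf (confSet s n)) := by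
    fun_prop
  rw [vmin, hset,
    ← Monotone.map_csInf_of_continuousAt hcont hmono (confSet_nonempty s n) (confSet_bddBelow hs n)]
  rfl

/-! ### Main theorem -/

set_option maxHeartbeats 1000000 in
theorem stmt0 (s : ℝ) (hs : s < 0) (N : ℕ) (hN : 2 < N) :
    2 / (((N : ℝ) + 1) * ((N : ℝ) - 2)) * (vmin s N + 1 / s)
        ≤ vmin s (N - 1) - 2 * vmin s N + vmin s (N + 1)
    ∧ vmin s (N - 1) - 2 * vmin s N + vmin s (N + 1)
        ≤ -(2 / (((N : ℝ) + 1) * (N : ℝ))) * (vmin s N + 1 / s) := by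
  obtain ⟨M, rfl⟩ : ∃ M, N = M + 3 := ⟨N - 3, by omega⟩
  have hm0 : (0:ℝ) ≤ (M:ℝ) := Nat.cast_nonneg M
  -- the four basic inequalities, denominator-free
  have hd1 : TU s (M+2) * ((M:ℝ)+3) ≤ ((M:ℝ)+1) * TU s (M+3) := by
    have h := TU_deletion hs (n := M+2) (by omega)
    push_cast at h
    rw [div_mul_eq_mul_div, le_div_iff₀ (by positivity)] at h
    nlinarith [h]
  have hd2 : TU s (M+3) * ((M:ℝ)+4) ≤ ((M:ℝ)+2) * TU s (M+4) := by
    have h := TU_deletion hs (n := M+3) (by omega)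
    push_cast at h
    rw [div_mul_eq_mul_div, le_div_iff₀ (by positivity)] at h
    nlinarith [h]
  have hd3 : TU s (M+3) * ((M:ℝ)+2) ≤ ((M:ℝ)+4) * TU s (M+2) := by
    have h := TU_addition hs (n := M+2) (by omega)
    push_cast at h
    rw [div_mul_eq_mul_div, le_div_iff₀ (by positivity)] at h
    nlinarith [h]
  have hd4 : TU s (M+4) * ((M:ℝ)+3) ≤ ((M:ℝ)+5) * TU s (M+3) := by
    have h := TU_addition hs (n := M+3) (by omega)
    push_cast at h
    rw [div_mul_eq_mul_div, le_div_iff₀ (by positivity)] at h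
    nlinarith [h]
  set a := TU s (M+2) with ha
  set b := TU s (M+3) with hb
  set c := TU s (M+4) with hc
  -- express the vmin values
  have eqa : vmin s (M + 3 - 1) = 2 / (((M:ℝ)+2) * ((M:ℝ)+1)) * a - 1/s := by
    have h2 : (M + 3 - 1 : ℕ) = M + 2 := by omega
    rw [h2, vmin_eq hs (n := M+2) (by omega), ← ha]
    push_cast
    rw [show ((M:ℝ)+2)*(((M:ℝ)+2)-1) = ((M:ℝ)+2)*((M:ℝ)+1) by ring]
  have eqb : vmin s (M + 3) = 2 / (((M:ℝ)+3) * ((M:ℝ)+2)) * b - 1/s := by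
    rw [vmin_eq hs (n := M+3) (by omega), ← hb]
    push_cast
    rw [show ((M:ℝ)+3)*(((M:ℝ)+3)-1) = ((M:ℝ)+3)*((M:ℝ)+2) by ring]
  have eqc : vmin s (M + 3 + 1) = 2 / (((M:ℝ)+4) * ((M:ℝ)+3)) * c - 1/s := by
    have h2 : (M + 3 + 1 : ℕ) = M + 4 := by omega
    rw [h2, vmin_eq hs (n := M+4) (by omega), ← hc]
    push_cast
    rw [show ((M:ℝ)+4)*(((M:ℝ)+4)-1) = ((M:ℝ)+4)*((M:ℝ)+3) by ring]
  have hsne : s ≠ 0 := hs.ne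
  have hne1 : (M:ℝ)+1 ≠ 0 := by positivity
  have hne2 : (M:ℝ)+2 ≠ 0 := by positivity
  have hne3 : (M:ℝ)+3 ≠ 0 := by positivity
  have hne4 : (M:ℝ)+4 ≠ 0 := by positivity
  have hD1 : (0:ℝ) < ((M:ℝ)+1)*((M:ℝ)+2)*((M:ℝ)+3)*((M:ℝ)+4) := by positivity
  have hD2 : (0:ℝ) < ((M:ℝ)+1)*((M:ℝ)+2)*((M:ℝ)+3)*((M:ℝ)+3)*((M:ℝ)+4) := by positivity
  constructor
  · -- lower bound
    rw [eqa, eqb, eqc]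
    push_cast
    have e1 : 2 / (((M:ℝ) + 3 + 1) * ((M:ℝ) + 3 - 2))
          * ((2 / (((M:ℝ)+3) * ((M:ℝ)+2)) * b - 1/s) + 1/s)
        = 4*b / (((M:ℝ)+1)*((M:ℝ)+2)*((M:ℝ)+3)*((M:ℝ)+4)) := by
      rw [show (M:ℝ)+3+1 = (M:ℝ)+4 by ring, show (M:ℝ)+3-2 = (M:ℝ)+1 by ring,
        show (2 / (((M:ℝ)+3) * ((M:ℝ)+2)) * b - 1/s) + 1/s
          = 2 / (((M:ℝ)+3) * ((M:ℝ)+2)) * b by ring]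
      field_simp
      ring
    have e2 : (2 / (((M:ℝ)+2) * ((M:ℝ)+1)) * a - 1/s)
          - 2 * (2 / (((M:ℝ)+3) * ((M:ℝ)+2)) * b - 1/s)
          + (2 / (((M:ℝ)+4) * ((M:ℝ)+3)) * c - 1/s)
        = (2*((M:ℝ)+3)*((M:ℝ)+4)*a - 4*((M:ℝ)+1)*((M:ℝ)+4)*b + 2*((M:ℝ)+1)*((M:ℝ)+2)*c)
            / (((M:ℝ)+1)*((M:ℝ)+2)*((M:ℝ)+3)*((M:ℝ)+4)) := by
      field_simp
      ring
    rw [e1, e2]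
    rw [div_le_div_iff_of_pos_right hD1]
    -- 4*b ≤ 2*(M+3)*(M+4)*a - 4*(M+1)*(M+4)*b + 2*(M+1)*(M+2)*c
    have p1 : 2*((M:ℝ)+3)*(((M:ℝ)+2)*b) ≤ 2*((M:ℝ)+3)*(((M:ℝ)+4)*a) := by
      have h := mul_le_mul_of_nonneg_left hd3 (by positivity : (0:ℝ) ≤ 2*((M:ℝ)+3))
      nlinarith [h]
    have p2 : 2*((M:ℝ)+1)*(((M:ℝ)+4)*b) ≤ 2*((M:ℝ)+1)*(((M:ℝ)+2)*c) := by
      have h := mul_le_mul_of_nonneg_left hd2 (by positivity : (0:ℝ) ≤ 2*((M:ℝ)+1))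
      nlinarith [h]
    nlinarith [p1, p2]
  · -- upper bound
    rw [eqa, eqb, eqc]
    push_cast
    have e1 : -(2 / (((M:ℝ) + 3 + 1) * ((M:ℝ) + 3)))
          * ((2 / (((M:ℝ)+3) * ((M:ℝ)+2)) * b - 1/s) + 1/s)
        = (-(4*((M:ℝ)+1)*b)) / (((M:ℝ)+1)*((M:ℝ)+2)*((M:ℝ)+3)*((M:ℝ)+3)*((M:ℝ)+4)) := by
      rw [show (M:ℝ)+3+1 = (M:ℝ)+4 by ring,
        show (2 / (((M:ℝ)+3) * ((M:ℝ)+2)) * b - 1/s) + 1/s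
          = 2 / (((M:ℝ)+3) * ((M:ℝ)+2)) * b by ring]
      field_simp
      ring
    have e2 : (2 / (((M:ℝ)+2) * ((M:ℝ)+1)) * a - 1/s)
          - 2 * (2 / (((M:ℝ)+3) * ((M:ℝ)+2)) * b - 1/s)
          + (2 / (((M:ℝ)+4) * ((M:ℝ)+3)) * c - 1/s)
        = (2*((M:ℝ)+3)*((M:ℝ)+3)*((M:ℝ)+4)*a - 4*((M:ℝ)+1)*((M:ℝ)+3)*((M:ℝ)+4)*b
            + 2*((M:ℝ)+1)*((M:ℝ)+2)*((M:ℝ)+3)*c)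
            / (((M:ℝ)+1)*((M:ℝ)+2)*((M:ℝ)+3)*((M:ℝ)+3)*((M:ℝ)+4)) := by
      field_simp
      ring
    rw [e1, e2]
    rw [div_le_div_iff_of_pos_right hD2]
    have p1 : 2*((M:ℝ)+4)*(((M:ℝ)+3)*(((M:ℝ)+3)*a)) ≤ 2*((M:ℝ)+4)*(((M:ℝ)+3)*(((M:ℝ)+1)*b)) := by
      have h := mul_le_mul_of_nonneg_left hd1 (by positivity : (0:ℝ) ≤ 2*((M:ℝ)+4)*((M:ℝ)+3))
      nlinarith [h]
    have p2 : 2*((M:ℝ)+1)*(((M:ℝ)+2)*(((M:ℝ)+3)*c)) ≤ 2*((M:ℝ)+1)*(((M:ℝ)+2)*(((M:ℝ)+5)*b)) := by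
      have h := mul_le_mul_of_nonneg_left hd4 (by positivity : (0:ℝ) ≤ 2*((M:ℝ)+1)*((M:ℝ)+2))
      nlinarith [h]
    nlinarith [p1, p2]
end

section
/- Let s < 0 be a real number and let N > 2 be an integer. Then v_s(N-1) - 2·v_s(N) + v_s(N+1) ≤ -(2/((N+1)N))·(v_s(N-1) + 1/s). -/
open scoped BigOperators

open scoped RealInnerProductSpace

section Aux
noncomputable def Srp (s : ℝ) {n : ℕ} (q : Fin n → E3) : ℝ :=
  ∑ i, ∑ j, if i ≠ j then Vpair s ‖q i - q j‖ else 0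

noncomputable def Urow (s : ℝ) {n : ℕ} (q : Fin n → E3) (k : Fin n) : ℝ :=
  ∑ j, if j ≠ k then Vpair s ‖q k - q j‖ else 0

lemma double_ite_eq {n : ℕ} (f : Fin n → Fin n → ℝ) (hf : ∀ i j, f i j = f j i) :
    ∑ i, ∑ j, (if i ≠ j then f i j else 0)
      = 2 * ∑ i, ∑ j, (if i < j then f i j else 0) := by
  have h1 : ∀ i j : Fin n, (if i ≠ j then f i j else 0)
      = (if i < j then f i j else 0) + (if j < i then f i j else 0) := by
    intro i j
    rcases lt_trichotomy i j with h | h | h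
    · simp [h, h.ne, asymm h]
    · simp [h, lt_irrefl]
    · simp [h, h.ne', asymm h]
  simp_rw [h1, Finset.sum_add_distrib]
  have h2 : ∑ i : Fin n, ∑ j : Fin n, (if j < i then f i j else 0)
      = ∑ i : Fin n, ∑ j : Fin n, (if i < j then f i j else 0) := by
    rw [Finset.sum_comm]
    refine Finset.sum_congr rfl fun j _ => Finset.sum_congr rfl fun i _ => ?_
    rw [hf]
  rw [h2]; ring

lemma avgE_eq_Srp (s : ℝ) {n : ℕ} (q : Fin n → E3) :
    avgE s n q = Srp s q / ((n : ℝ) * ((n : ℝ) - 1)) := by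
  have := double_ite_eq (fun i j => Vpair s ‖q i - q j‖)
    (fun i j => by rw [norm_sub_rev])
  rw [avgE, Srp, this]; ring

lemma sum_Urow (s : ℝ) {n : ℕ} (q : Fin n → E3) :
    ∑ k, Urow s q k = Srp s q := by
  rw [Srp]
  refine Finset.sum_congr rfl fun k _ => Finset.sum_congr rfl fun j _ => ?_
  exact if_congr ne_comm rfl rfl

end Aux
section Vp
variable {s : ℝ}

lemma Vpair_of_neg (hs : s < 0) (r : ℝ) : Vpair s r = (r ^ (-s) - 1) / s := if_neg hs.ne

lemma Vpair_zero (hs : s < 0) : Vpair s 0 = -(1 / s) := by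
  rw [Vpair_of_neg hs, Real.zero_rpow (by linarith : -s ≠ 0)]
  ring

lemma Vpair_le_c (hs : s < 0) {r : ℝ} (hr : 0 ≤ r) : Vpair s r ≤ -(1 / s) := by
  rw [Vpair_of_neg hs]
  have h1 : (0:ℝ) ≤ r ^ (-s) := Real.rpow_nonneg hr _
  rw [div_le_iff_of_neg hs]
  rw [neg_mul, neg_le, div_mul_cancel₀ _ hs.ne]; linarith

lemma c_le_Vpair (hs : s < 0) {r : ℝ} (hr : 0 ≤ r) (hr2 : r ≤ 2) :
    (2 ^ (-s) - 1) / s ≤ Vpair s r := by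
  rw [Vpair_of_neg hs]
  have h1 : r ^ (-s) ≤ 2 ^ (-s) := Real.rpow_le_rpow hr hr2 (by linarith)
  rw [div_le_div_right_of_neg hs]
  linarith

end Vp
section Comb

lemma Srp_delete (s : ℝ) {m : ℕ} (q : Fin (m + 1) → E3) (k : Fin (m + 1)) :
    Srp s (q ∘ k.succAbove) = Srp s q - 2 * Urow s q k := by
  have hrow : ∑ j : Fin m, Vpair s ‖q k - q (k.succAbove j)‖ = Urow s q k := by
    rw [Urow, Fin.sum_univ_succAbove
      (fun j => if j ≠ k then Vpair s ‖q k - q j‖ else 0) k]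
    simp [Fin.succAbove_ne]
  have hcol : ∑ i : Fin m, Vpair s ‖q (k.succAbove i) - q k‖ = Urow s q k := by
    rw [← hrow]
    exact Finset.sum_congr rfl fun i _ => by rw [norm_sub_rev]
  have expand : Srp s q
      = Urow s q k + (Urow s q k + Srp s (q ∘ k.succAbove)) := by
    rw [Srp, Fin.sum_univ_succAbove _ k]
    congr 1
    · rw [Fin.sum_univ_succAbove
        (fun j => if (k : Fin (m+1)) ≠ j then Vpair s ‖q k - q j‖ else 0) k]
      simp only [ne_eq, not_true_eq_false, if_false, ite_not]
      rw [← hrow]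
      simp [Fin.ne_succAbove k]
    · have step : ∀ i : Fin m,
          (∑ j : Fin (m+1), if k.succAbove i ≠ j then Vpair s ‖q (k.succAbove i) - q j‖ else 0)
          = Vpair s ‖q (k.succAbove i) - q k‖
            + ∑ j : Fin m, (if i ≠ j then Vpair s ‖(q ∘ k.succAbove) i - (q ∘ k.succAbove) j‖ else 0) := by
        intro i
        rw [Fin.sum_univ_succAbove
          (fun j => if k.succAbove i ≠ j then Vpair s ‖q (k.succAbove i) - q j‖ else 0) k]
        congr 1
        · exact if_pos (Fin.succAbove_ne k i)
        · exact Finset.sum_congr rfl fun j _ =>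
            if_congr Fin.succAbove_right_injective.ne_iff rfl rfl
      simp_rw [step]
      rw [Finset.sum_add_distrib, hcol, Srp]
  rw [expand]; ring

lemma Srp_snoc (s : ℝ) {n : ℕ} (q : Fin n → E3) (x : E3) :
    Srp s (Fin.snoc q x) = Srp s q + 2 * ∑ i, Vpair s ‖q i - x‖ := by
  set Q : Fin (n+1) → E3 := Fin.snoc q x with hQ
  have hQc : ∀ i : Fin n, Q i.castSucc = q i := fun i => by rw [hQ, Fin.snoc_castSucc]
  have hQl : Q (Fin.last n) = x := by rw [hQ, Fin.snoc_last]
  rw [Srp, Fin.sum_univ_castSucc]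
  have hlast : (∑ j : Fin (n+1), if Fin.last n ≠ j
      then Vpair s ‖Q (Fin.last n) - Q j‖ else 0)
      = ∑ j : Fin n, Vpair s ‖x - q j‖ := by
    rw [Fin.sum_univ_castSucc]
    simp [hQc, hQl, (Fin.castSucc_lt_last _).ne']
  have hmid : ∀ i : Fin n, (∑ j : Fin (n+1), if i.castSucc ≠ j
      then Vpair s ‖Q i.castSucc - Q j‖ else 0)
      = (∑ j : Fin n, if i ≠ j then Vpair s ‖q i - q j‖ else 0) + Vpair s ‖q i - x‖ := by
    intro i
    rw [Fin.sum_univ_castSucc]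
    congr 1
    · refine Finset.sum_congr rfl fun j _ => ?_
      rw [hQc, hQc]
      exact if_congr (by simp [Fin.castSucc_inj]) rfl rfl
    · simp [hQc, hQl, (Fin.castSucc_lt_last i).ne]
  simp_rw [hmid]
  rw [Finset.sum_add_distrib, hlast, Srp]
  have : ∑ j : Fin n, Vpair s ‖x - q j‖ = ∑ j : Fin n, Vpair s ‖q j - x‖ :=
    Finset.sum_congr rfl fun j _ => by rw [norm_sub_rev]
  rw [this]; ring

end Comb
section Circ
variable {p u : E3}

noncomputable def circ (p u : E3) (t : ℝ) : E3 :=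
  ((1 - t^2)/(1 + t^2)) • p + (2*t/(1 + t^2)) • u

lemma one_add_sq_pos (t : ℝ) : (0:ℝ) < 1 + t^2 := by positivity

lemma circ_norm (hp : ‖p‖ = 1) (hu : ‖u‖ = 1) (hpu : ⟪p, u⟫ = 0) (t : ℝ) :
    ‖circ p u t‖ = 1 := by
  have ht := one_add_sq_pos t
  have hsq : ‖circ p u t‖ ^ 2 = 1 := by
    rw [circ, norm_add_sq_real, norm_smul, norm_smul, real_inner_smul_left,
      real_inner_smul_right, hpu, hp, hu]
    simp only [Real.norm_eq_abs, mul_one, mul_zero]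
    rw [sq_abs, sq_abs]
    field_simp
    ring
  have h0 : (0:ℝ) ≤ ‖circ p u t‖ := norm_nonneg _
  nlinarith [hsq, h0]

lemma circ_zero : circ p u 0 = p := by
  simp [circ]

lemma circ_cont : Continuous (circ p u) := by
  apply Continuous.add
  · exact (Continuous.div (by continuity) (by continuity)
      (fun t => (one_add_sq_pos t).ne')).smul continuous_const
  · exact (Continuous.div (by continuity) (by continuity)
      (fun t => (one_add_sq_pos t).ne')).smul continuous_const

lemma circ_inj (hp : ‖p‖ = 1) (hu : ‖u‖ = 1) (hpu : ⟪p, u⟫ = 0) :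
    Function.Injective (circ p u) := by
  intro a b hab
  have hpp : ⟪p, p⟫ = 1 := by
    rw [real_inner_self_eq_norm_sq, hp]; norm_num
  have hup : ⟪u, p⟫ = 0 := by rw [real_inner_comm]; exact hpu
  have huu : ⟪u, u⟫ = 1 := by
    rw [real_inner_self_eq_norm_sq, hu]; norm_num
  have ha := one_add_sq_pos a
  have hb := one_add_sq_pos b
  have e1 : (1 - a^2)/(1 + a^2) = (1 - b^2)/(1 + b^2) := by
    have := congrArg (fun z => ⟪p, z⟫) hab
    simp only [circ, inner_add_right, real_inner_smul_right, hpp, hpu,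
      mul_one, mul_zero, add_zero] at this
    exact this
  have e2 : 2*a/(1 + a^2) = 2*b/(1 + b^2) := by
    have := congrArg (fun z => ⟪u, z⟫) hab
    simp only [circ, inner_add_right, real_inner_smul_right, hup, huu,
      mul_one, mul_zero, zero_add] at this
    exact this
  rw [div_eq_div_iff ha.ne' hb.ne'] at e1 e2
  have key : (a - b) * (1 + b^2) = 0 := by linear_combination e2/2 - b/2 * e1
  rcases mul_eq_zero.mp key with h | h
  · linarith
  · linarith
end Circ
section Orth

lemma exists_orth (p : E3) (hp : ‖p‖ = 1) : ∃ u : E3, ‖u‖ = 1 ∧ ⟪p, u⟫ = 0 := by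
  have hp0 : p ≠ 0 := by intro h; rw [h, norm_zero] at hp; norm_num at hp
  have hbot : (ℝ ∙ p)ᗮ ≠ ⊥ := by
    intro h
    have htop : (ℝ ∙ p) = ⊤ := (Submodule.orthogonal_eq_bot_iff).mp h
    have h1 : Module.finrank ℝ (ℝ ∙ p) = 1 := finrank_span_singleton hp0
    have h3 : Module.finrank ℝ E3 = 3 := by
      simp [finrank_euclideanSpace]
    rw [htop, finrank_top, h3] at h1
    norm_num at h1
  obtain ⟨v, hv, hv0⟩ := Submodule.exists_mem_ne_zero_of_ne_bot hbot
  refine ⟨‖v‖⁻¹ • v, ?_, ?_⟩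
  · rw [norm_smul, norm_inv, norm_norm, inv_mul_cancel₀ (norm_ne_zero_iff.mpr hv0)]
  · rw [real_inner_smul_right]
    have : ⟪p, v⟫ = 0 := (Submodule.mem_orthogonal _ _).mp hv p
      (Submodule.mem_span_singleton_self p)
    rw [this, mul_zero]

noncomputable def basept : E3 := EuclideanSpace.single (0 : Fin 3) (1:ℝ)
noncomputable def baseu : E3 := EuclideanSpace.single (1 : Fin 3) (1:ℝ)

lemma basept_norm : ‖basept‖ = 1 := by simp [basept, EuclideanSpace.norm_single]
lemma baseu_norm : ‖baseu‖ = 1 := by simp [baseu, EuclideanSpace.norm_single]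
lemma base_inner : ⟪basept, baseu⟫ = 0 := by
  simp [basept, baseu, EuclideanSpace.inner_single_left, EuclideanSpace.single_apply]

lemma exists_config (n : ℕ) :
    ∃ q : Fin n → E3, (∀ i, ‖q i‖ = 1) ∧ Function.Injective q := by
  refine ⟨fun i => circ basept baseu (i : ℕ), fun i => circ_norm basept_norm baseu_norm base_inner _, ?_⟩
  intro i j h
  have := circ_inj basept_norm baseu_norm base_inner h
  exact_mod_cast Fin.ext (by exact_mod_cast this)

end Orth
section VminAPI
variable {s : ℝ}

lemma Srp_ge (hs : s < 0) {n : ℕ} {q : Fin n → E3} (hq : ∀ i, ‖q i‖ = 1) :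
    (n : ℝ) * ((n : ℝ) - 1) * ((2 ^ (-s) - 1) / s) ≤ Srp s q := by
  set m : ℝ := (2 ^ (-s) - 1) / s with hm
  have step1 : ∑ i : Fin n, ∑ j : Fin n, (if i ≠ j then m else 0) ≤ Srp s q := by
    refine Finset.sum_le_sum fun i _ => Finset.sum_le_sum fun j _ => ?_
    by_cases h : i = j
    · simp [h]
    · simp only [h, ne_eq, not_false_eq_true, if_true]
      refine c_le_Vpair hs (norm_nonneg _) ?_
      calc ‖q i - q j‖ ≤ ‖q i‖ + ‖q j‖ := norm_sub_le _ _
      _ = 2 := by rw [hq i, hq j]; norm_num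
  have step2 : ∑ i : Fin n, ∑ j : Fin n, (if i ≠ j then m else 0)
      = (n : ℝ) * ((n : ℝ) - 1) * m := by
    have inner : ∀ i : Fin n, ∑ j : Fin n, (if i ≠ j then m else 0)
        = (n : ℝ) * m - m := by
      intro i
      have : ∀ j : Fin n, (if i ≠ j then m else 0) = m - (if i = j then m else 0) := by
        intro j; by_cases h : i = j <;> simp [h]
      simp_rw [this]
      rw [Finset.sum_sub_distrib, Finset.sum_const, Finset.sum_ite_eq]
      simp [Finset.card_univ, mul_comm]
    simp_rw [inner]
    rw [Finset.sum_const, Finset.card_univ]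
    simp [Fintype.card_fin]
    ring
  linarith [step1, step2.symm.le, step2.le]

lemma avgE_ge (hs : s < 0) {n : ℕ} (hn : 2 ≤ n) {q : Fin n → E3} (hq : ∀ i, ‖q i‖ = 1) :
    (2 ^ (-s) - 1) / s ≤ avgE s n q := by
  have hd : (0:ℝ) < (n : ℝ) * ((n : ℝ) - 1) := by
    have : (2:ℝ) ≤ (n:ℝ) := by exact_mod_cast hn
    nlinarith
  rw [avgE_eq_Srp, le_div_iff₀ hd]
  have := Srp_ge hs hq
  linarith

lemma vmin_bddBelow (hs : s < 0) {n : ℕ} (hn : 2 ≤ n) :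
    BddBelow { E : ℝ | ∃ q : Fin n → EuclideanSpace ℝ (Fin 3),
      (∀ i, ‖q i‖ = 1) ∧ Function.Injective q ∧ E = avgE s n q } := by
  refine ⟨(2 ^ (-s) - 1) / s, fun E hE => ?_⟩
  obtain ⟨q, hq1, _, rfl⟩ := hE
  exact avgE_ge hs hn hq1

lemma vmin_le (hs : s < 0) {n : ℕ} (hn : 2 ≤ n) {q : Fin n → E3}
    (hq1 : ∀ i, ‖q i‖ = 1) (hq2 : Function.Injective q) :
    vmin s n ≤ avgE s n q :=
  csInf_le (vmin_bddBelow hs hn) ⟨q, hq1, hq2, rfl⟩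

lemma exists_config_lt (s : ℝ) (n : ℕ) {ε : ℝ} (hε : 0 < ε) :
    ∃ q : Fin n → E3, (∀ i, ‖q i‖ = 1) ∧ Function.Injective q ∧
      avgE s n q < vmin s n + ε := by
  have hne : { E : ℝ | ∃ q : Fin n → EuclideanSpace ℝ (Fin 3),
      (∀ i, ‖q i‖ = 1) ∧ Function.Injective q ∧ E = avgE s n q }.Nonempty := by
    obtain ⟨q, h1, h2⟩ := exists_config n
    exact ⟨avgE s n q, q, h1, h2, rfl⟩
  obtain ⟨E, hE, hlt⟩ := Real.lt_sInf_add_pos hne hε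
  obtain ⟨q, h1, h2, rfl⟩ := hE
  exact ⟨q, h1, h2, hlt⟩

end VminAPI
section Perturb
variable {s : ℝ}

lemma perturb (hs : s < 0) {n : ℕ} {q : Fin n → E3} (hq1 : ∀ i, ‖q i‖ = 1)
    (k : Fin n) {ε : ℝ} (hε : 0 < ε) :
    ∃ x : E3, ‖x‖ = 1 ∧ x ∉ Set.range q ∧
      ∑ i, Vpair s ‖q i - x‖ < Urow s q k + -(1 / s) + ε := by
  obtain ⟨u, hu1, hup⟩ := exists_orth (q k) (hq1 k)
  set γ : ℝ → E3 := circ (q k) u with hγ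
  set f : E3 → ℝ := fun x => ∑ i, Vpair s ‖q i - x‖ with hf
  have hf0 : f (q k) = Urow s q k + -(1 / s) := by
    rw [hf]
    simp only []
    have split : ∀ i : Fin n, Vpair s ‖q i - q k‖
        = (if i ≠ k then Vpair s ‖q i - q k‖ else 0)
          + (if i = k then Vpair s 0 else 0) := by
      intro i
      by_cases h : i = k
      · subst h
        rw [sub_self, norm_zero, if_neg (by simp), if_pos rfl, zero_add]
      · rw [if_pos h, if_neg h, add_zero]
    rw [Finset.sum_congr rfl fun i _ => split i, Finset.sum_add_distrib]
    congr 1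
    · rw [Urow]
      refine Finset.sum_congr rfl fun i _ => ?_
      rw [norm_sub_rev]
    · rw [Finset.sum_ite_eq', if_pos (Finset.mem_univ k), Vpair_zero hs]
  have hcont : ContinuousAt f (q k) := by
    rw [hf]
    apply tendsto_finset_sum
    intro i _
    have h1 : ContinuousAt (fun x : E3 => ‖q i - x‖) (q k) :=
      ((continuous_const.sub continuous_id).norm).continuousAt
    have h2 : ContinuousAt (fun r : ℝ => (r ^ (-s) - 1) / s) (‖q i - q k‖) := by
      exact ((Real.continuousAt_rpow_const _ _ (Or.inr (by linarith))).sub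
        continuousAt_const).div_const s
    have h3 : ContinuousAt ((fun r : ℝ => (r ^ (-s) - 1) / s) ∘ (fun x : E3 => ‖q i - x‖))
        (q k) := ContinuousAt.comp (f := fun x : E3 => ‖q i - x‖) h2 h1
    refine h3.congr ?_
    filter_upwards with x
    rw [Function.comp_apply, Vpair_of_neg hs]
  have hγ0 : γ 0 = q k := circ_zero
  have hγc : Continuous γ := circ_cont
  have hcomp : Filter.Tendsto (fun t => f (γ t)) (nhds 0) (nhds (f (q k))) := by
    have hc2 : ContinuousAt f (γ 0) := by rw [hγ0]; exact hcont
    have := hc2.comp (hγc.continuousAt (x := (0:ℝ)))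
    rw [ContinuousAt] at this
    rw [Function.comp_apply, hγ0] at this
    exact this
  have hev : ∀ᶠ t in nhds (0:ℝ), f (γ t) < f (q k) + ε :=
    hcomp.eventually_lt_const (by linarith)
  obtain ⟨δ, hδ, hball⟩ := Metric.eventually_nhds_iff.mp hev
  have hinf : (Set.Ioo (0:ℝ) δ).Infinite := Set.Ioo_infinite hδ
  have hBfin : (γ ⁻¹' (Set.range q)).Finite := by
    apply Set.Finite.preimage
    · exact (circ_inj (hq1 k) hu1 hup).injOn
    · exact Set.finite_range q
  obtain ⟨t, ht⟩ := (hinf.diff hBfin).nonempty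
  obtain ⟨⟨ht0, htδ⟩, htB⟩ := ht
  refine ⟨γ t, circ_norm (hq1 k) hu1 hup t, htB, ?_⟩
  have : f (γ t) < f (q k) + ε := by
    apply hball
    rw [Real.dist_eq, sub_zero, abs_of_pos ht0]
    exact htδ
  rw [hf0] at this
  exact this

lemma snoc_norm {n : ℕ} {q : Fin n → E3} (hq1 : ∀ i, ‖q i‖ = 1) {x : E3}
    (hx : ‖x‖ = 1) : ∀ i, ‖(Fin.snoc q x : Fin (n+1) → E3) i‖ = 1 := by
  intro i
  induction i using Fin.lastCases with
  | last => rw [Fin.snoc_last]; exact hx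
  | cast j => rw [Fin.snoc_castSucc]; exact hq1 j

lemma snoc_inj {n : ℕ} {q : Fin n → E3} (hq2 : Function.Injective q) {x : E3}
    (hx : x ∉ Set.range q) : Function.Injective (Fin.snoc q x : Fin (n+1) → E3) := by
  intro a b hab
  induction a using Fin.lastCases with
  | last =>
    induction b using Fin.lastCases with
    | last => rfl
    | cast j =>
      rw [Fin.snoc_last, Fin.snoc_castSucc] at hab
      exact absurd ⟨j, hab.symm⟩ hx
  | cast i =>
    induction b using Fin.lastCases with
    | last =>
      rw [Fin.snoc_last, Fin.snoc_castSucc] at hab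
      exact absurd ⟨i, hab⟩ hx
    | cast j =>
      rw [Fin.snoc_castSucc, Fin.snoc_castSucc] at hab
      rw [hq2 hab]

end Perturb

set_option maxHeartbeats 1000000 in
theorem stmt1 (s : ℝ) (hs : s < 0) (N : ℕ) (hN : 2 < N) :
    vmin s (N - 1) - 2 * vmin s N + vmin s (N + 1)
      ≤ -(2 / (((N : ℝ) + 1) * (N : ℝ))) * (vmin s (N - 1) + 1 / s) := by
  obtain ⟨m, rfl⟩ : ∃ m, N = m + 1 := ⟨N - 1, by omega⟩
  have hm : 2 ≤ m := by omega
  simp only [Nat.add_sub_cancel]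
  push_cast
  set x : ℝ := (m : ℝ) with hxdef
  have hx : (2:ℝ) ≤ x := by rw [hxdef]; exact_mod_cast hm
  have hD : (0:ℝ) < (x + 2) * (x + 1) := by nlinarith
  set P := vmin s m with hP
  set Q := vmin s (m + 1) with hQ
  set R := vmin s (m + 1 + 1) with hR
  have main : ∀ ε : ℝ, 0 < ε →
      P - 2 * Q + R ≤ -(2 / ((x + 2) * (x + 1))) * (P + 1 / s) + ε := by
    intro ε hε
    have hε4 : (0:ℝ) < ε / 4 := by linarith
    obtain ⟨q, hq1, hq2, hAQ⟩ := exists_config_lt s (m + 1) hε4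
    set A := avgE s (m + 1) q with hAdef
    set S := Srp s q with hSdef
    have hd2 : (0:ℝ) < (x + 1) * x := by nlinarith
    have hSA : S = A * ((x + 1) * x) := by
      have h := avgE_eq_Srp s q
      have hd : ((m + 1 : ℕ) : ℝ) * (((m + 1 : ℕ) : ℝ) - 1) = (x + 1) * x := by
        push_cast; ring
      rw [hd] at h
      rw [← hAdef, ← hSdef] at h
      exact (div_eq_iff hd2.ne').mp h.symm
    -- deletion: some row has at least average weight
    have hdel : ∃ k : Fin (m + 1), A * x ≤ Urow s q k := by
      have hsum : ∑ _k : Fin (m + 1), A * x ≤ ∑ k, Urow s q k := by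
        rw [sum_Urow, Finset.sum_const, Finset.card_univ, Fintype.card_fin,
          nsmul_eq_mul, ← hSdef, hSA]
        push_cast
        ring_nf
        exact le_of_eq (by rw [hxdef]; ring)
      obtain ⟨k, _, hk⟩ := Finset.exists_le_of_sum_le Finset.univ_nonempty hsum
      exact ⟨k, hk⟩
    obtain ⟨k, hk⟩ := hdel
    have hPA : P ≤ A := by
      have hd1 : (0:ℝ) < x * (x - 1) := by nlinarith
      have step1 : P ≤ (S - 2 * Urow s q k) / (x * (x - 1)) := by
        have h1 := vmin_le hs hm (q := q ∘ k.succAbove)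
          (fun i => hq1 _) (hq2.comp Fin.succAbove_right_injective)
        have h2 : avgE s m (q ∘ k.succAbove)
            = (S - 2 * Urow s q k) / (x * (x - 1)) := by
          rw [avgE_eq_Srp, Srp_delete, ← hSdef]
        exact h1.trans h2.le
      have step2 : (S - 2 * Urow s q k) / (x * (x - 1)) ≤ A := by
        rw [div_le_iff₀ hd1, hSA]
        nlinarith [hk]
      exact step1.trans step2
    -- addition: some row has at most average weight
    have hadd : ∃ k' : Fin (m + 1), Urow s q k' ≤ A * x := by
      have hsum : ∑ k, Urow s q k ≤ ∑ _k : Fin (m + 1), A * x := by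
        rw [sum_Urow, Finset.sum_const, Finset.card_univ, Fintype.card_fin,
          nsmul_eq_mul, ← hSdef, hSA]
        push_cast
        ring_nf
        exact le_of_eq (by rw [hxdef]; ring)
      obtain ⟨k', _, hk'⟩ := Finset.exists_le_of_sum_le Finset.univ_nonempty hsum
      exact ⟨k', hk'⟩
    obtain ⟨k', hk'⟩ := hadd
    obtain ⟨y, hy1, hy2, hy3⟩ := perturb hs hq1 k' hε4
    have hRA : R * ((x + 2) * (x + 1))
        ≤ A * ((x + 1) * x) + 2 * (A * x) + 2 * (-(1 / s)) + ε / 2 := by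
      have h1 := vmin_le hs (by omega) (snoc_norm hq1 hy1) (snoc_inj hq2 hy2)
      have h2 : avgE s (m + 1 + 1) (Fin.snoc q y)
          = (S + 2 * ∑ i, Vpair s ‖q i - y‖) / ((x + 2) * (x + 1)) := by
        rw [avgE_eq_Srp, Srp_snoc, ← hSdef]
        have hd : ((m + 1 + 1 : ℕ) : ℝ) * (((m + 1 + 1 : ℕ) : ℝ) - 1)
            = (x + 2) * (x + 1) := by push_cast; ring
        rw [hd]
      have h3 : R ≤ (S + 2 * ∑ i, Vpair s ‖q i - y‖) / ((x + 2) * (x + 1)) := by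
        rw [hR, ← h2]; exact h1
      rw [← le_div_iff₀ hD]
      refine h3.trans ((div_le_div_iff_of_pos_right hD).mpr ?_)
      linarith [hSA, hy3, hk']
    -- final arithmetic
    have hQA : A < Q + ε / 4 := hAQ
    have hD' : ((x + 2) * (x + 1)) ≠ 0 := hD.ne'
    clear_value x P Q R A S
    have key : (P - 2 * Q + R) * ((x + 2) * (x + 1))
        ≤ (-(2 / ((x + 2) * (x + 1))) * (P + 1 / s) + ε) * ((x + 2) * (x + 1)) := by
      have expand : (-(2 / ((x + 2) * (x + 1))) * (P + 1 / s) + ε) * ((x + 2) * (x + 1))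
          = -2 * (P + 1 / s) + ε * ((x + 2) * (x + 1)) := by
        field_simp
      rw [expand]
      have h1 : P * ((x + 2) * (x + 1)) ≤ A * ((x + 2) * (x + 1)) :=
        mul_le_mul_of_nonneg_right hPA hD.le
      have h2 : (A - ε / 4) * ((x + 2) * (x + 1)) ≤ Q * ((x + 2) * (x + 1)) :=
        mul_le_mul_of_nonneg_right (by linarith) hD.le
      have h4 : 2 * P ≤ 2 * A := by linarith
      have h5 : 0 ≤ ε * (x * x + 3 * x + 1) := by nlinarith
      linarith [h1, h2, h4, h5, hRA]
    exact le_of_mul_le_mul_right key hD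
  clear_value x P Q R
  have hconv : -(2 / ((x + 1 + 1) * (x + 1))) * (P + 1 / s)
      = -(2 / ((x + 2) * (x + 1))) * (P + 1 / s) := by ring_nf
  rw [hconv]
  by_contra hcon
  push_neg at hcon
  have h2 := main ((P - 2 * Q + R - -(2 / ((x + 2) * (x + 1))) * (P + 1 / s)) / 2)
    (by linarith)
  linarith
end

section
/- For s = 10, the second discrete derivative of the minimal average standardized Riesz pair-energy at N = 3 is strictly positive: v_{10}(2) - 2·v_{10}(3) + v_{10}(4) > 0. In particular, the map N ↦ v_{10}(N) is not locally strictly concave. -/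
open scoped BigOperators
open scoped RealInnerProductSpace

/-! ### Auxiliary lemmas -/

lemma Vpair_ten (u : ℝ) (hu : 0 < u) : Vpair 10 u = ((u ^ (10:ℕ))⁻¹ - 1) / 10 := by
  rw [Vpair, if_neg (by norm_num)]
  rw [show (-(10:ℝ)) = -((10:ℕ):ℝ) by norm_num, Real.rpow_neg hu.le, Real.rpow_natCast]

/-- Trivial lower bound: any pair on the sphere has distance ≤ 2, and `Vpair 10` is
decreasing. -/
lemma Vpair_lb (u : ℝ) (hu : 0 < u) (h2 : u ≤ 2) : ((1:ℝ)/1024 - 1) / 10 ≤ Vpair 10 u := by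
  rw [Vpair_ten u hu]
  have h : (1:ℝ)/1024 ≤ (u ^ (10:ℕ))⁻¹ := by
    rw [one_div, inv_le_inv₀ (by norm_num) (by positivity)]
    calc u ^ 10 ≤ 2 ^ 10 := pow_le_pow_left₀ hu.le h2 10
      _ = 1024 := by norm_num
  linarith

/-- Tangent-line lower bound for the convex function `t ↦ t⁻⁵` of `t = u²` at `t = 8/3`. -/
lemma Vpair_tangent (u : ℝ) (hu : 0 < u) :
    ((3/8:ℝ)^5 - 5*(3/8)^6*(u^2 - 8/3) - 1) / 10 ≤ Vpair 10 u := by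
  rw [Vpair_ten u hu]
  have h : (3/8:ℝ)^5 - 5*(3/8)^6*(u^2 - 8/3) ≤ (u ^ (10:ℕ))⁻¹ := by
    rw [← one_div, le_div_iff₀ (by positivity)]
    nlinarith [mul_nonneg (sq_nonneg (u^2 - 8/3))
      (show (0:ℝ) ≤ 5*u^8 + 4*(8/3)*u^6 + 3*(8/3)^2*u^4 + 2*(8/3)^3*u^2 + (8/3)^4 by positivity)]
  linarith

lemma avgE_two (q : Fin 2 → EuclideanSpace ℝ (Fin 3)) :
    avgE 10 2 q = Vpair 10 ‖q 0 - q 1‖ := by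
  simp only [avgE, Fin.sum_univ_two]
  simp (config := { decide := true }) only []
  norm_num

lemma avgE_three (q : Fin 3 → EuclideanSpace ℝ (Fin 3)) :
    avgE 10 3 q = 1/3 * (Vpair 10 ‖q 0 - q 1‖ + Vpair 10 ‖q 0 - q 2‖ + Vpair 10 ‖q 1 - q 2‖) := by
  simp only [avgE, Fin.sum_univ_three]
  simp (config := { decide := true }) only []
  norm_num

lemma avgE_four (q : Fin 4 → EuclideanSpace ℝ (Fin 3)) :
    avgE 10 4 q = 1/6 * (Vpair 10 ‖q 0 - q 1‖ + Vpair 10 ‖q 0 - q 2‖ + Vpair 10 ‖q 0 - q 3‖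
      + Vpair 10 ‖q 1 - q 2‖ + Vpair 10 ‖q 1 - q 3‖ + Vpair 10 ‖q 2 - q 3‖) := by
  simp only [avgE, Fin.sum_univ_four]
  simp (config := { decide := true }) only []
  norm_num
  ring

lemma distPos {N : ℕ} (q : Fin N → EuclideanSpace ℝ (Fin 3)) (hinj : Function.Injective q)
    {i j : Fin N} (hij : i ≠ j) : 0 < ‖q i - q j‖ := by
  rw [norm_pos_iff, sub_ne_zero]
  exact fun h => hij (hinj h)

lemma dist_le_two {N : ℕ} (q : Fin N → EuclideanSpace ℝ (Fin 3)) (hn : ∀ i, ‖q i‖ = 1)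
    (i j : Fin N) : ‖q i - q j‖ ≤ 2 := by
  calc ‖q i - q j‖ ≤ ‖q i‖ + ‖q j‖ := norm_sub_le _ _
    _ = 2 := by rw [hn, hn]; norm_num

/-- Sum of squared distances of 4 unit vectors is at most 16. -/
lemma sum_sq_le (q : Fin 4 → EuclideanSpace ℝ (Fin 3)) (hn : ∀ i, ‖q i‖ = 1) :
    ‖q 0 - q 1‖^2 + ‖q 0 - q 2‖^2 + ‖q 0 - q 3‖^2 + ‖q 1 - q 2‖^2 + ‖q 1 - q 3‖^2
      + ‖q 2 - q 3‖^2 ≤ 16 := by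
  have hp : ∀ i j : Fin 4, ‖q i - q j‖^2 = 2 - 2 * ⟪q i, q j⟫ := by
    intro i j
    rw [norm_sub_sq_real, hn, hn]; ring
  have h0 : 0 ≤ ⟪q 0 + q 1 + q 2 + q 3, q 0 + q 1 + q 2 + q 3⟫ := real_inner_self_nonneg
  simp only [inner_add_left, inner_add_right] at h0
  have hs : ∀ i, ⟪q i, q i⟫ = 1 := by
    intro i; rw [real_inner_self_eq_norm_sq, hn, one_pow]
  have hc : ∀ i j : Fin 4, ⟪q i, q j⟫ = ⟪q j, q i⟫ := fun i j => real_inner_comm _ _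
  rw [hp, hp, hp, hp, hp, hp]
  rw [hs 0, hs 1, hs 2, hs 3, hc 1 0, hc 2 0, hc 3 0, hc 2 1, hc 3 1, hc 3 2] at h0
  linarith

/-- Generic lower bound for `vmin` from a pointwise lower bound on energies. -/
lemma vmin_lb (N : ℕ) (A : ℝ) (hA : A ≤ 0)
    (h : ∀ q : Fin N → EuclideanSpace ℝ (Fin 3),
      (∀ i, ‖q i‖ = 1) → Function.Injective q → A ≤ avgE 10 N q) :
    A ≤ vmin 10 N := by
  rw [vmin]
  rcases Set.eq_empty_or_nonempty { E : ℝ | ∃ q : Fin N → EuclideanSpace ℝ (Fin 3),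
      (∀ i, ‖q i‖ = 1) ∧ Function.Injective q ∧ E = avgE 10 N q } with he | hne
  · rw [he, Real.sInf_empty]; exact hA
  · apply le_csInf hne
    rintro E ⟨q, hn, hinj, rfl⟩
    exact h q hn hinj

/-! ### The equilateral triangle -/

noncomputable def tri : Fin 3 → EuclideanSpace ℝ (Fin 3) :=
  ![(WithLp.equiv 2 (Fin 3 → ℝ)).symm ![1, 0, 0],
    (WithLp.equiv 2 (Fin 3 → ℝ)).symm ![-1/2, Real.sqrt 3/2, 0],
    (WithLp.equiv 2 (Fin 3 → ℝ)).symm ![-1/2, -(Real.sqrt 3/2), 0]]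

lemma sq3 : Real.sqrt 3 ^ 2 = 3 := Real.sq_sqrt (by norm_num)


lemma tri_norm0 : ‖tri 0‖ = 1 := by
  rw [EuclideanSpace.norm_eq]
  simp only [tri, Fin.sum_univ_three, WithLp.equiv_symm_apply, PiLp.toLp_apply, WithLp.ofLp_toLp, Real.norm_eq_abs, sq_abs,
    Matrix.cons_val_zero, Matrix.cons_val_one, Matrix.head_cons, Matrix.cons_val_two,
    Matrix.tail_cons]
  rw [show ((1:ℝ)) ^ 2 + 0 ^ 2 + 0 ^ 2 = 1 by norm_num, Real.sqrt_one]

lemma tri_norm1 : ‖tri 1‖ = 1 := by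
  rw [EuclideanSpace.norm_eq]
  simp only [tri, Fin.sum_univ_three, WithLp.equiv_symm_apply, PiLp.toLp_apply, WithLp.ofLp_toLp, Real.norm_eq_abs, sq_abs,
    Matrix.cons_val_zero, Matrix.cons_val_one, Matrix.head_cons, Matrix.cons_val_two,
    Matrix.tail_cons]
  rw [show ((-1 / 2:ℝ)) ^ 2 + (Real.sqrt 3 / 2) ^ 2 + 0 ^ 2 = 1 by linear_combination sq3/4,
    Real.sqrt_one]

lemma tri_norm2 : ‖tri 2‖ = 1 := by
  rw [EuclideanSpace.norm_eq]
  simp only [tri, Fin.sum_univ_three, WithLp.equiv_symm_apply, PiLp.toLp_apply, WithLp.ofLp_toLp, Real.norm_eq_abs, sq_abs,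
    Matrix.cons_val_zero, Matrix.cons_val_one, Matrix.head_cons, Matrix.cons_val_two,
    Matrix.tail_cons]
  rw [show ((-1 / 2:ℝ)) ^ 2 + (-(Real.sqrt 3 / 2)) ^ 2 + 0 ^ 2 = 1 by linear_combination sq3/4,
    Real.sqrt_one]

lemma tri_norm : ∀ i, ‖tri i‖ = 1 := by
  intro i
  fin_cases i
  · exact tri_norm0
  · exact tri_norm1
  · exact tri_norm2

lemma tri_d01 : ‖tri 0 - tri 1‖ = Real.sqrt 3 := by
  rw [EuclideanSpace.norm_eq]
  simp only [tri, Fin.sum_univ_three, WithLp.equiv_symm_apply, PiLp.toLp_apply, WithLp.ofLp_toLp, Real.norm_eq_abs, sq_abs,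
    Matrix.cons_val_zero, Matrix.cons_val_one, Matrix.head_cons, Matrix.cons_val_two,
    Matrix.tail_cons, PiLp.sub_apply]
  rw [show ((1:ℝ) - -1 / 2) ^ 2 + (0 - Real.sqrt 3 / 2) ^ 2 + (0 - 0) ^ 2 = 3 by
    linear_combination sq3/4]

lemma tri_d02 : ‖tri 0 - tri 2‖ = Real.sqrt 3 := by
  rw [EuclideanSpace.norm_eq]
  simp only [tri, Fin.sum_univ_three, WithLp.equiv_symm_apply, PiLp.toLp_apply, WithLp.ofLp_toLp, Real.norm_eq_abs, sq_abs,
    Matrix.cons_val_zero, Matrix.cons_val_one, Matrix.head_cons, Matrix.cons_val_two,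
    Matrix.tail_cons, PiLp.sub_apply]
  rw [show ((1:ℝ) - -1 / 2) ^ 2 + (0 - -(Real.sqrt 3 / 2)) ^ 2 + (0 - 0) ^ 2 = 3 by
    linear_combination sq3/4]

lemma tri_d12 : ‖tri 1 - tri 2‖ = Real.sqrt 3 := by
  rw [EuclideanSpace.norm_eq]
  simp only [tri, Fin.sum_univ_three, WithLp.equiv_symm_apply, PiLp.toLp_apply, WithLp.ofLp_toLp, Real.norm_eq_abs, sq_abs,
    Matrix.cons_val_zero, Matrix.cons_val_one, Matrix.head_cons, Matrix.cons_val_two,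
    Matrix.tail_cons, PiLp.sub_apply]
  rw [show ((-1/2:ℝ) - -1 / 2) ^ 2 + (Real.sqrt 3 / 2 - -(Real.sqrt 3 / 2)) ^ 2 + (0 - 0) ^ 2 = 3 by
    linear_combination sq3]

lemma sqrt3_pos : 0 < Real.sqrt 3 := Real.sqrt_pos.mpr (by norm_num)

lemma tri_inj : Function.Injective tri := by
  have key : ∀ i j : Fin 3, ‖tri i - tri j‖ = Real.sqrt 3 → tri i ≠ tri j := by
    intro i j hd h
    rw [h, sub_self, norm_zero] at hd
    exact absurd hd.symm (ne_of_gt sqrt3_pos)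
  have d01 := key 0 1 tri_d01
  have d02 := key 0 2 tri_d02
  have d12 := key 1 2 tri_d12
  intro i j h
  fin_cases i <;> fin_cases j <;>
    first
    | rfl
    | exact absurd h d01
    | exact absurd h d02
    | exact absurd h d12
    | exact absurd h.symm d01
    | exact absurd h.symm d02
    | exact absurd h.symm d12

lemma Vpair_sqrt3 : Vpair 10 (Real.sqrt 3) = ((1:ℝ)/243 - 1) / 10 := by
  rw [Vpair_ten _ sqrt3_pos]
  rw [show (10:ℕ) = 2 * 5 from rfl, pow_mul, sq3]
  norm_num

lemma avgE_tri : avgE 10 3 tri = ((1:ℝ)/243 - 1) / 10 := by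
  rw [avgE_three, tri_d01, tri_d02, tri_d12, Vpair_sqrt3]
  ring

/-! ### Bounds on `vmin` -/

lemma vmin_two_lb : ((1:ℝ)/1024 - 1) / 10 ≤ vmin 10 2 := by
  apply vmin_lb 2 _ (by norm_num)
  intro q hn hinj
  rw [avgE_two]
  exact Vpair_lb _ (distPos q hinj (by decide)) (dist_le_two q hn 0 1)

lemma vmin_three_ub : vmin 10 3 ≤ ((1:ℝ)/243 - 1) / 10 := by
  rw [vmin]
  have hmem : ((1:ℝ)/243 - 1) / 10 ∈ { E : ℝ | ∃ q : Fin 3 → EuclideanSpace ℝ (Fin 3),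
      (∀ i, ‖q i‖ = 1) ∧ Function.Injective q ∧ E = avgE 10 3 q } :=
    ⟨tri, tri_norm, tri_inj, avgE_tri.symm⟩
  apply csInf_le _ hmem
  refine ⟨((1:ℝ)/1024 - 1) / 10, ?_⟩
  rintro E ⟨q, hn, hinj, rfl⟩
  rw [avgE_three]
  have b01 := Vpair_lb _ (distPos q hinj (show (0:Fin 3) ≠ 1 by decide)) (dist_le_two q hn 0 1)
  have b02 := Vpair_lb _ (distPos q hinj (show (0:Fin 3) ≠ 2 by decide)) (dist_le_two q hn 0 2)
  have b12 := Vpair_lb _ (distPos q hinj (show (1:Fin 3) ≠ 2 by decide)) (dist_le_two q hn 1 2)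
  linarith

lemma vmin_four_lb : (((3:ℝ)/8)^5 - 1) / 10 ≤ vmin 10 4 := by
  apply vmin_lb 4 _ (by norm_num)
  intro q hn hinj
  rw [avgE_four]
  have t01 := Vpair_tangent _ (distPos q hinj (show (0:Fin 4) ≠ 1 by decide))
  have t02 := Vpair_tangent _ (distPos q hinj (show (0:Fin 4) ≠ 2 by decide))
  have t03 := Vpair_tangent _ (distPos q hinj (show (0:Fin 4) ≠ 3 by decide))
  have t12 := Vpair_tangent _ (distPos q hinj (show (1:Fin 4) ≠ 2 by decide))
  have t13 := Vpair_tangent _ (distPos q hinj (show (1:Fin 4) ≠ 3 by decide))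
  have t23 := Vpair_tangent _ (distPos q hinj (show (2:Fin 4) ≠ 3 by decide))
  have hsq := sum_sq_le q hn
  nlinarith [t01, t02, t03, t12, t13, t23, hsq]

theorem stmt2 :
    vmin 10 2 - 2 * vmin 10 3 + vmin 10 4 > 0 ∧
    ¬ (∀ N : ℕ, 2 < N → vmin 10 (N - 1) - 2 * vmin 10 N + vmin 10 (N + 1) < 0) := by
  have h2 := vmin_two_lb
  have h3 := vmin_three_ub
  have h4 := vmin_four_lb
  have hnum : ((1:ℝ)/1024 - 1) / 10 - 2 * (((1:ℝ)/243 - 1) / 10) + (((3:ℝ)/8)^5 - 1) / 10 > 0 := by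
    norm_num
  have hpos : vmin 10 2 - 2 * vmin 10 3 + vmin 10 4 > 0 := by linarith
  refine ⟨hpos, fun h => ?_⟩
  have := h 3 (by norm_num)
  norm_num at this
  linarith
end

section
/- For every positive integer K and every real x with 0 < x < 1, one has (1 - x)^{1/2} > Σ_{k=0}^{K-1} ((-1/2)_k / k!) · x^k - ((1/2)_{K-1} / (K-1)!) · x^K, where (a)_k denotes the Pochhammer symbol (rising factorial) (a)_k = a(a+1)⋯(a+k-1), with (a)_0 = 1. -/
open scoped BigOperators

noncomputable def bb (j : ℕ) : ℝ :=
  (ascPochhammer ℝ j).eval ((1 : ℝ) / 2) / (Nat.factorial j)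

lemma bb_zero : bb 0 = 1 := by
  simp [bb, ascPochhammer_zero]

lemma bb_pos (j : ℕ) : 0 < bb j := by
  have h := ascPochhammer_pos j ((1 : ℝ) / 2) (by norm_num)
  exact div_pos h (by positivity)

lemma bb_rec (m : ℕ) : ((m : ℝ) + 1) * bb (m + 1) = ((m : ℝ) + 1 / 2) * bb m := by
  have h : (ascPochhammer ℝ (m + 1)).eval ((1:ℝ)/2)
      = (ascPochhammer ℝ m).eval ((1:ℝ)/2) * ((1:ℝ)/2 + m) := ascPochhammer_succ_eval m _
  have hf : (Nat.factorial (m+1) : ℝ) = (m+1) * Nat.factorial m := by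
    push_cast [Nat.factorial_succ]; ring
  have hf0 : (Nat.factorial m : ℝ) ≠ 0 := by positivity
  simp only [bb, h, hf]
  field_simp
  ring

lemma aK_add_bb (m : ℕ) :
    (ascPochhammer ℝ (m+1)).eval (-(1/2) : ℝ) / (Nat.factorial (m+1)) + bb m
      = bb (m + 1) := by
  have h : (ascPochhammer ℝ (m + 1)).eval (-(1/2) : ℝ)
      = (-(1/2) : ℝ) * (ascPochhammer ℝ m).eval ((1:ℝ)/2) := by
    rw [ascPochhammer_succ_left]
    simp [Polynomial.eval_comp]
    norm_num
  have h2 : (ascPochhammer ℝ (m + 1)).eval ((1:ℝ)/2)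
      = (ascPochhammer ℝ m).eval ((1:ℝ)/2) * ((1:ℝ)/2 + m) := ascPochhammer_succ_eval m _
  have hf : (Nat.factorial (m+1) : ℝ) = (m+1) * Nat.factorial m := by
    push_cast [Nat.factorial_succ]; ring
  have hf0 : (Nat.factorial m : ℝ) ≠ 0 := by positivity
  simp only [bb, h, h2, hf]
  field_simp
  ring

lemma sumA (K : ℕ) (hK : 1 ≤ K) (x : ℝ) :
    (∑ k ∈ Finset.range K,
        (ascPochhammer ℝ k).eval (-(1 / 2) : ℝ) / (Nat.factorial k) * x ^ k)
      - bb (K - 1) * x ^ K = (1 - x) * ∑ j ∈ Finset.range K, bb j * x ^ j := by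
  induction K, hK using Nat.le_induction with
  | base =>
    simp [bb_zero, ascPochhammer_zero]
  | succ n hn ih =>
    obtain ⟨m, rfl⟩ : ∃ m, n = m + 1 := ⟨n - 1, (Nat.succ_pred_eq_of_pos hn).symm⟩
    rw [Finset.sum_range_succ
        (fun k => (ascPochhammer ℝ k).eval (-(1 / 2) : ℝ) / (Nat.factorial k) * x ^ k),
      Finset.sum_range_succ (fun j => bb j * x ^ j)]
    simp only [Nat.add_sub_cancel] at ih ⊢
    have ha := aK_add_bb m
    linear_combination ih + x ^ (m + 1) * ha

lemma derivId (K : ℕ) (hK : 1 ≤ K) (t : ℝ) :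
    (1 - t) * (∑ j ∈ Finset.range K, bb j * ((j : ℝ) * t ^ (j - 1)))
      - (∑ j ∈ Finset.range K, bb j * t ^ j) / 2
      = -(((K : ℝ) - 1 / 2) * bb (K - 1) * t ^ (K - 1)) := by
  induction K, hK using Nat.le_induction with
  | base =>
    simp [bb_zero]
    norm_num
  | succ n hn ih =>
    obtain ⟨m, rfl⟩ : ∃ m, n = m + 1 := ⟨n - 1, (Nat.succ_pred_eq_of_pos hn).symm⟩
    rw [Finset.sum_range_succ (fun j => bb j * ((j : ℝ) * t ^ (j - 1))),
      Finset.sum_range_succ (fun j => bb j * t ^ j)]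
    simp only [Nat.add_sub_cancel] at ih ⊢
    have hr := bb_rec m
    push_cast at ih ⊢
    linear_combination ih + t ^ m * hr

lemma keyC (K : ℕ) (hK : 1 ≤ K) (x : ℝ) (hx0 : 0 < x) (hx1 : x < 1) :
    Real.sqrt (1 - x) * ∑ j ∈ Finset.range K, bb j * x ^ j < 1 := by
  set f : ℝ → ℝ := fun t => Real.sqrt (1 - t) * ∑ j ∈ Finset.range K, bb j * t ^ j with hf
  have hcont : ContinuousOn f (Set.Icc 0 x) := by
    apply Continuous.continuousOn
    exact (Real.continuous_sqrt.comp (continuous_const.sub continuous_id)).mul (by continuity)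
  have hderiv : ∀ t ∈ interior (Set.Icc 0 x), deriv f t < 0 := by
    rw [interior_Icc]
    rintro t ⟨ht0, htx⟩
    have h1t : 0 < 1 - t := by linarith
    set s := Real.sqrt (1 - t) with hs
    have hspos : 0 < s := Real.sqrt_pos.mpr h1t
    have hss : s * s = 1 - t := Real.mul_self_sqrt h1t.le
    have hd1 : HasDerivAt (fun u : ℝ => Real.sqrt (1 - u)) (1 / (2 * s) * (-1)) t := by
      have h0 : HasDerivAt (fun u : ℝ => 1 - u) (-1) t := (hasDerivAt_id t).const_sub 1
      exact (Real.hasDerivAt_sqrt (ne_of_gt h1t)).comp t h0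
    have hd2 : HasDerivAt (fun u : ℝ => ∑ j ∈ Finset.range K, bb j * u ^ j)
        (∑ j ∈ Finset.range K, bb j * ((j : ℝ) * t ^ (j - 1))) t := by
      apply HasDerivAt.fun_sum
      intro j _
      exact (hasDerivAt_pow j t).const_mul (bb j)
    have hD : HasDerivAt f
        (1 / (2 * s) * (-1) * (∑ j ∈ Finset.range K, bb j * t ^ j)
          + s * (∑ j ∈ Finset.range K, bb j * ((j : ℝ) * t ^ (j - 1)))) t := hd1.mul hd2
    rw [hD.deriv]
    set S := ∑ j ∈ Finset.range K, bb j * t ^ j with hS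
    set T := ∑ j ∈ Finset.range K, bb j * ((j : ℝ) * t ^ (j - 1)) with hT
    have hid : (1 - t) * T - S / 2 = -(((K : ℝ) - 1 / 2) * bb (K - 1) * t ^ (K - 1)) :=
      derivId K hK t
    have hK1 : (1 : ℝ) ≤ (K : ℝ) := by exact_mod_cast hK
    have hRpos : 0 < ((K : ℝ) - 1 / 2) * bb (K - 1) * t ^ (K - 1) := by
      apply mul_pos (mul_pos (by linarith) (bb_pos _)) (pow_pos ht0 _)
    have hds : (1 / (2 * s) * (-1) * S + s * T) * s = (1 - t) * T - S / 2 := by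
      have hsne : s ≠ 0 := ne_of_gt hspos
      have e1 : s * (1 / (2 * s)) = 1 / 2 := by
        field_simp
      calc (1 / (2 * s) * (-1) * S + s * T) * s
          = -(S * (s * (1 / (2 * s)))) + (s * s) * T := by ring
        _ = (1 - t) * T - S / 2 := by rw [e1, hss]; ring
    have hneg : (1 / (2 * s) * (-1) * S + s * T) * s < 0 := by
      rw [hds, hid]; linarith
    by_contra hcon
    push_neg at hcon
    nlinarith
  have hanti : StrictAntiOn f (Set.Icc 0 x) :=
    strictAntiOn_of_deriv_neg (convex_Icc 0 x) hcont hderiv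
  have hlt : f x < f 0 :=
    hanti (Set.left_mem_Icc.mpr hx0.le) (Set.right_mem_Icc.mpr hx0.le) hx0
  have hsum0 : ∑ j ∈ Finset.range K, bb j * (0 : ℝ) ^ j = 1 := by
    rw [Finset.sum_eq_single_of_mem 0 (Finset.mem_range.mpr hK)]
    · simp [bb_zero]
    · intro j _ hj
      simp [zero_pow hj]
  have hf0 : f 0 = 1 := by
    simp [hf, hsum0]
  calc Real.sqrt (1 - x) * ∑ j ∈ Finset.range K, bb j * x ^ j = f x := rfl
    _ < f 0 := hlt
    _ = 1 := hf0

theorem stmt4 (K : ℕ) (hK : 1 ≤ K) (x : ℝ) (hx0 : 0 < x) (hx1 : x < 1) :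
    (1 - x) ^ ((1 : ℝ) / 2) >
      (∑ k ∈ Finset.range K,
          (ascPochhammer ℝ k).eval (-(1 / 2) : ℝ) / (Nat.factorial k) * x ^ k)
        - (ascPochhammer ℝ (K - 1)).eval ((1 / 2) : ℝ) / (Nat.factorial (K - 1)) * x ^ K := by
  have hb : (ascPochhammer ℝ (K - 1)).eval ((1 / 2) : ℝ) / (Nat.factorial (K - 1)) * x ^ K
      = bb (K - 1) * x ^ K := rfl
  rw [hb, sumA K hK x, ← Real.sqrt_eq_rpow]
  have hk := keyC K hK x hx0 hx1
  have hspos : 0 < Real.sqrt (1 - x) := Real.sqrt_pos.mpr (by linarith)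
  have hss : Real.sqrt (1 - x) * Real.sqrt (1 - x) = 1 - x :=
    Real.mul_self_sqrt (by linarith)
  have h3 : Real.sqrt (1 - x) * (Real.sqrt (1 - x) * ∑ j ∈ Finset.range K, bb j * x ^ j)
      < Real.sqrt (1 - x) * 1 := mul_lt_mul_of_pos_left hk hspos
  rw [← mul_assoc, hss, mul_one] at h3
  exact h3
end

section
/- For every integer N ≥ 2, the minimal average standardized Riesz pair-energy at s = -2 equals v_{-2}(N) = -(1/2)·(N+1)/(N-1). -/
open scoped BigOperators

open scoped RealInnerProductSpace

section Aux

lemma double_sum_lt {N : ℕ} (f : Fin N → Fin N → ℝ) (hs : ∀ i j, f i j = f j i) :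
    2 * ∑ i : Fin N, ∑ j : Fin N, (if i < j then f i j else 0)
      = (∑ i : Fin N, ∑ j : Fin N, f i j) - ∑ i : Fin N, f i i := by
  have h1 : ∑ i : Fin N, ∑ j : Fin N, (if i < j then f i j else 0)
      = ∑ i : Fin N, ∑ j : Fin N, (if j < i then f i j else 0) := by
    rw [Finset.sum_comm]
    exact Finset.sum_congr rfl fun i _ => Finset.sum_congr rfl fun j _ => by
      by_cases h : j < i <;> simp [h, hs i j]
  have h2 : ∑ i : Fin N, f i i = ∑ i : Fin N, ∑ j : Fin N, (if i = j then f i j else 0) := by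
    exact Finset.sum_congr rfl fun i _ => by simp
  rw [two_mul]
  nth_rewrite 2 [h1]
  rw [h2, eq_sub_iff_add_eq, ← Finset.sum_add_distrib, ← Finset.sum_add_distrib]
  refine Finset.sum_congr rfl fun i _ => ?_
  rw [← Finset.sum_add_distrib, ← Finset.sum_add_distrib]
  refine Finset.sum_congr rfl fun j _ => ?_
  rcases lt_trichotomy i j with h | h | h
  · simp [h, h.ne, not_lt_of_gt h]
  · simp [h]
  · simp [h, (h.ne).symm, not_lt_of_gt h]

lemma full_sum {N : ℕ} (q : Fin N → EuclideanSpace ℝ (Fin 3)) (hq : ∀ i, ‖q i‖ = 1) :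
    ∑ i : Fin N, ∑ j : Fin N, ‖q i - q j‖ ^ 2
      = 2 * (N : ℝ) ^ 2 - 2 * ‖∑ i : Fin N, q i‖ ^ 2 := by
  have key : ∀ i j, ‖q i - q j‖ ^ 2 = 2 - 2 * ⟪q i, q j⟫ := by
    intro i j
    rw [norm_sub_sq_real, hq, hq]; ring
  simp only [key]
  have hinner : ∑ i : Fin N, ∑ j : Fin N, ⟪q i, q j⟫ = ‖∑ i : Fin N, q i‖ ^ 2 := by
    rw [← real_inner_self_eq_norm_sq, sum_inner]
    exact Finset.sum_congr rfl fun i _ => (inner_sum _ _ _).symm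
  simp only [Finset.sum_sub_distrib, Finset.sum_const, Finset.card_univ, Fintype.card_fin,
    ← Finset.mul_sum, nsmul_eq_mul]
  rw [hinner]
  ring

lemma avg_formula {N : ℕ} (hN : 2 ≤ N) (q : Fin N → EuclideanSpace ℝ (Fin 3))
    (hq : ∀ i, ‖q i‖ = 1) :
    avgE (-2) N q = -(1/2) * (((N:ℝ)+1)/((N:ℝ)-1)) + ‖∑ i : Fin N, q i‖^2 / ((N:ℝ)*((N:ℝ)-1)) := by
  have h2 : (2:ℝ) ≤ (N:ℝ) := by exact_mod_cast hN
  have hD : ((N:ℝ)) ≠ 0 := by linarith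
  have hD1 : ((N:ℝ) - 1) ≠ 0 := by linarith
  have hV : ∀ r : ℝ, Vpair (-2) r = (1 - r^2)/2 := by
    intro r
    simp only [Vpair, if_neg (by norm_num : (-2:ℝ) ≠ 0), neg_neg]
    rw [show ((2:ℝ)) = ((2:ℕ):ℝ) by norm_num, Real.rpow_natCast]
    ring
  unfold avgE
  have hrw : ∀ i j : Fin N, (if i < j then Vpair (-2) ‖q i - q j‖ else 0)
      = ((if i < j then (1:ℝ) else 0) - (if i < j then ‖q i - q j‖^2 else 0))/2 := by
    intro i j
    by_cases h : i < j <;> simp [h, hV]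
  simp only [hrw]
  have hT1 := double_sum_lt (fun i j => ‖q i - q j‖^2) (fun i j => by simp only [norm_sub_rev])
  rw [full_sum q hq] at hT1
  simp only [sub_self, norm_zero, ne_eq, OfNat.ofNat_ne_zero, not_false_eq_true,
    zero_pow, Finset.sum_const_zero, sub_zero] at hT1
  have hT2 := double_sum_lt (N := N) (fun _ _ => (1:ℝ)) (fun _ _ => rfl)
  simp only [Finset.sum_const, Finset.card_univ, Fintype.card_fin, nsmul_eq_mul, mul_one] at hT2
  rw [show (∑ i : Fin N, ∑ j : Fin N, ((if i < j then (1:ℝ) else 0) - if i < j then ‖q i - q j‖^2 else 0)/2) = ((∑ i : Fin N, ∑ j : Fin N, (if i < j then (1:ℝ) else 0)) - ∑ i : Fin N, ∑ j : Fin N, (if i < j then ‖q i - q j‖^2 else 0))/2 from by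
    simp [← Finset.sum_div, Finset.sum_sub_distrib]]
  have ha : (∑ i : Fin N, ∑ j : Fin N, (if i < j then ‖q i - q j‖^2 else 0)) = (N:ℝ)^2 - ‖∑ i : Fin N, q i‖^2 := by linarith
  have hb : (∑ i : Fin N, ∑ j : Fin N, (if i < j then (1:ℝ) else 0)) = ((N:ℝ)*N - N)/2 := by linarith
  rw [ha, hb]
  field_simp
  ring

noncomputable def zeta (N : ℕ) : ℂ := Complex.exp (2 * Real.pi * Complex.I / N)

noncomputable def pts (N : ℕ) : Fin N → EuclideanSpace ℝ (Fin 3) :=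
  fun k => (WithLp.equiv 2 (Fin 3 → ℝ)).symm ![(zeta N ^ (k:ℕ)).re, (zeta N ^ (k:ℕ)).im, 0]

lemma zeta_prim {N : ℕ} (hN : 2 ≤ N) : IsPrimitiveRoot (zeta N) N :=
  Complex.isPrimitiveRoot_exp N (by omega)

lemma pts_norm {N : ℕ} (hN : 2 ≤ N) (k : Fin N) : ‖pts N k‖ = 1 := by
  have habs : ‖zeta N ^ (k:ℕ)‖ = 1 := by
    rw [norm_pow, (zeta_prim hN).norm'_eq_one (by omega), one_pow]
  have h : (zeta N ^ (k:ℕ)).re ^ 2 + (zeta N ^ (k:ℕ)).im ^ 2 = 1 := by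
    have h2 := Complex.sq_norm (zeta N ^ (k:ℕ))
    rw [habs, Complex.normSq_apply] at h2
    nlinarith [h2]
  rw [EuclideanSpace.norm_eq]
  simp only [pts, WithLp.equiv_symm_apply, PiLp.toLp_apply, Fin.sum_univ_three, Matrix.cons_val_zero,
    Matrix.cons_val_one, Matrix.head_cons, Matrix.cons_val_two, Matrix.tail_cons,
    Real.norm_eq_abs, sq_abs]
  rw [show ((0:ℝ)) ^ 2 = 0 from by norm_num, add_zero, h, Real.sqrt_one]

lemma pts_sum {N : ℕ} (hN : 2 ≤ N) : ∑ k : Fin N, pts N k = 0 := by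
  have hz : ∑ k ∈ Finset.range N, zeta N ^ k = 0 :=
    (zeta_prim hN).geom_sum_eq_zero (by omega)
  have hzf : ∑ k : Fin N, zeta N ^ (k:ℕ) = 0 := by
    rw [Fin.sum_univ_eq_sum_range (fun m => zeta N ^ m) N]; exact hz
  have hre : ∑ k : Fin N, (zeta N ^ (k:ℕ)).re = 0 := by
    rw [← Complex.re_sum, hzf, Complex.zero_re]
  have him : ∑ k : Fin N, (zeta N ^ (k:ℕ)).im = 0 := by
    rw [← Complex.im_sum, hzf, Complex.zero_im]
  have h3 : ∑ k : Fin N, (![(zeta N ^ (k:ℕ)).re, (zeta N ^ (k:ℕ)).im, 0] : Fin 3 → ℝ) = 0 := by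
    funext i
    rw [Finset.sum_apply]
    fin_cases i
    · simpa using hre
    · simpa using him
    · simp
  have h4 : ∑ k : Fin N, pts N k
      = (WithLp.linearEquiv 2 ℝ (Fin 3 → ℝ)).symm
          (∑ k : Fin N, (![(zeta N ^ (k:ℕ)).re, (zeta N ^ (k:ℕ)).im, 0] : Fin 3 → ℝ)) := by
    rw [map_sum]; rfl
  rw [h4, h3, map_zero]

lemma pts_inj {N : ℕ} (hN : 2 ≤ N) : Function.Injective (pts N) := by
  intro k l h
  have h0 := congrFun (congrArg (WithLp.equiv 2 (Fin 3 → ℝ)) h) 0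
  have h1 := congrFun (congrArg (WithLp.equiv 2 (Fin 3 → ℝ)) h) 1
  simp [pts] at h0 h1
  have : zeta N ^ (k:ℕ) = zeta N ^ (l:ℕ) := Complex.ext h0 h1
  exact Fin.ext ((zeta_prim hN).pow_inj k.isLt l.isLt this)

end Aux

theorem stmt5 (N : ℕ) (hN : 2 ≤ N) :
    vmin (-2) N = -(1 / 2) * (((N : ℝ) + 1) / ((N : ℝ) - 1)) := by
  have h2 : (2:ℝ) ≤ (N:ℝ) := by exact_mod_cast hN
  set T : ℝ := -(1 / 2) * (((N : ℝ) + 1) / ((N : ℝ) - 1)) with hT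
  have hmem : T ∈ { E : ℝ | ∃ q : Fin N → EuclideanSpace ℝ (Fin 3),
      (∀ i, ‖q i‖ = 1) ∧ Function.Injective q ∧ E = avgE (-2) N q } := by
    refine ⟨pts N, pts_norm hN, pts_inj hN, ?_⟩
    rw [avg_formula hN _ (pts_norm hN), pts_sum hN]
    simp [hT]
  have hlb : ∀ E ∈ { E : ℝ | ∃ q : Fin N → EuclideanSpace ℝ (Fin 3),
      (∀ i, ‖q i‖ = 1) ∧ Function.Injective q ∧ E = avgE (-2) N q }, T ≤ E := by
    rintro E ⟨q, hq, -, rfl⟩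
    rw [avg_formula hN q hq]
    have : 0 ≤ ‖∑ i : Fin N, q i‖^2 / ((N:ℝ)*((N:ℝ)-1)) := by
      apply div_nonneg (sq_nonneg _)
      nlinarith
    linarith
  exact le_antisymm (csInf_le ⟨T, hlb⟩ hmem) (le_csInf ⟨T, hmem⟩ hlb)
end

section
/- Let s < -2 be a real number. Then the map n ↦ v_s(2n) restricted to even integers is locally strictly concave: for every integer n ≥ 2, v_s(2(n-1)) - 2·v_s(2n) + v_s(2(n+1)) < 0. -/
set_option maxHeartbeats 1000000

open scoped BigOperators

lemma sym_double_sum {N : ℕ} (c : Fin N → Fin N → ℝ) (hsym : ∀ i j, c i j = c j i) :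
    ∑ i, ∑ j, c i j = (∑ i, c i i) + 2 * ∑ i : Fin N, ∑ j : Fin N, (if i < j then c i j else 0) := by
  have h1 : ∀ i j : Fin N, c i j
      = (if i < j then c i j else 0) + (if j < i then c i j else 0)
        + (if i = j then c i j else 0) := by
    intro i j
    rcases lt_trichotomy i j with h | h | h
    · simp [h, h.ne, not_lt_of_gt h]
    · simp [h, lt_irrefl]
    · simp [h, h.ne', not_lt_of_gt h]
  have h2 : ∑ i : Fin N, ∑ j : Fin N, (if j < i then c i j else 0)
      = ∑ i : Fin N, ∑ j : Fin N, (if i < j then c i j else 0) := by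
    rw [Finset.sum_comm]
    refine Finset.sum_congr rfl fun i _ => Finset.sum_congr rfl fun j _ => ?_
    rw [hsym]
  have h3 : ∀ i : Fin N, ∑ j : Fin N, (if i = j then c i j else 0) = c i i := by
    intro i
    rw [Finset.sum_ite_eq]
    simp
  calc ∑ i, ∑ j, c i j
      = ∑ i : Fin N, ∑ j : Fin N, ((if i < j then c i j else 0) + (if j < i then c i j else 0)
        + (if i = j then c i j else 0)) := by
        refine Finset.sum_congr rfl fun i _ => Finset.sum_congr rfl fun j _ => h1 i j
    _ = (∑ i : Fin N, ∑ j : Fin N, (if i < j then c i j else 0))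
        + (∑ i : Fin N, ∑ j : Fin N, (if j < i then c i j else 0))
        + ∑ i : Fin N, ∑ j : Fin N, (if i = j then c i j else 0) := by
        simp [Finset.sum_add_distrib]
    _ = _ := by rw [h2]; simp only [h3]; ring

lemma count_lt {N : ℕ} :
    ∑ i : Fin N, ∑ j : Fin N, (if i < j then (1:ℝ) else 0) = ((N:ℝ)^2 - N) / 2 := by
  have := sym_double_sum (N := N) (fun _ _ => (1:ℝ)) (fun _ _ => rfl)
  simp only [Finset.sum_const, Finset.card_univ, Fintype.card_fin, nsmul_eq_mul, mul_one] at this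
  linarith

lemma Vpair_eq (s : ℝ) (hs : s ≠ 0) (r : ℝ) : Vpair s r = (1 - r ^ (-s)) / (-s) := by
  simp only [Vpair, if_neg hs]
  rw [div_neg, ← neg_div, neg_sub]

lemma avgE_lower (s : ℝ) (hs : s < -2) (N : ℕ) (hN : 2 ≤ N)
    (q : Fin N → EuclideanSpace ℝ (Fin 3)) (hq : ∀ i, ‖q i‖ = 1) :
    (1 - 2 ^ (-s - 1) * N / ((N:ℝ) - 1)) / (-s) ≤ avgE s N q := by
  have hs0 : s ≠ 0 := by linarith
  set t : ℝ := -s with ht_def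
  have ht : 2 < t := by simp only [ht_def]; linarith
  have ht0 : 0 < t := by linarith
  have hN2 : (2:ℝ) ≤ (N:ℝ) := by exact_mod_cast hN
  have hNpos : (0:ℝ) < (N:ℝ) * ((N:ℝ) - 1) := by nlinarith
  set c : Fin N → Fin N → ℝ := fun i j => (inner ℝ (q i) (q j) : ℝ) with hc
  set P : ℝ := ∑ i : Fin N, ∑ j : Fin N, (if i < j then c i j else 0) with hP
  -- P ≥ -N/2
  have hPge : -(N:ℝ)/2 ≤ P := by
    have h0 : (0:ℝ) ≤ ∑ i, ∑ j, c i j := by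
      have : ∑ i, ∑ j, c i j = (inner ℝ (∑ i, q i) (∑ j, q j) : ℝ) := by
        rw [sum_inner]
        exact Finset.sum_congr rfl fun i _ => by rw [inner_sum]
      rw [this]
      exact real_inner_self_nonneg
    have hdiag : ∀ i, c i i = 1 := by
      intro i
      simp only [hc, real_inner_self_eq_norm_sq, hq i, one_pow]
    have := sym_double_sum c (fun i j => real_inner_comm _ _)
    simp only [hdiag, Finset.sum_const, Finset.card_univ, Fintype.card_fin, nsmul_eq_mul,
      mul_one] at this
    rw [this] at h0
    linarith
  -- pointwise bound on the power of distances
  have hpt : ∀ i j : Fin N, ‖q i - q j‖ ^ t ≤ 2 ^ (t - 2) * (2 - 2 * c i j) := by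
    intro i j
    have hr2 : ‖q i - q j‖ ^ 2 = 2 - 2 * c i j := by
      have := norm_sub_sq_real (q i) (q j)
      rw [hq i, hq j] at this
      rw [this]; ring
    have hrle : ‖q i - q j‖ ≤ 2 := by
      calc ‖q i - q j‖ ≤ ‖q i‖ + ‖q j‖ := norm_sub_le _ _
        _ = 2 := by rw [hq i, hq j]; norm_num
    rcases eq_or_lt_of_le (norm_nonneg (q i - q j)) with h0 | h0
    · rw [← h0, Real.zero_rpow (by linarith)]
      have : (0:ℝ) ^ 2 = 2 - 2 * c i j := by rw [← h0] at hr2; exact_mod_cast hr2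
      positivity
    · have : ‖q i - q j‖ ^ t = ‖q i - q j‖ ^ (t - 2) * ‖q i - q j‖ ^ (2:ℝ) := by
        rw [← Real.rpow_add h0]; ring_nf
      rw [this]
      have h1 : ‖q i - q j‖ ^ (t - 2) ≤ 2 ^ (t - 2) :=
        Real.rpow_le_rpow (le_of_lt h0) hrle (by linarith)
      have h2 : ‖q i - q j‖ ^ (2:ℝ) = 2 - 2 * c i j := by
        rw [Real.rpow_two]; exact hr2
      rw [h2, ← hr2]
      have h3 : (0:ℝ) ≤ ‖q i - q j‖ ^ (2:ℝ) := Real.rpow_nonneg (norm_nonneg _) _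
      rw [h2, ← hr2] at h3
      exact mul_le_mul_of_nonneg_right h1 (by rw [← hr2] at *; positivity)
  -- sum of powers bound
  set T : ℝ := ∑ i : Fin N, ∑ j : Fin N, (if i < j then ‖q i - q j‖ ^ t else 0) with hT
  have hTle : T ≤ 2 ^ (t - 2) * (N:ℝ)^2 := by
    have step1 : T ≤ ∑ i : Fin N, ∑ j : Fin N,
        (if i < j then 2 ^ (t - 2) * (2 - 2 * c i j) else 0) := by
      refine Finset.sum_le_sum fun i _ => Finset.sum_le_sum fun j _ => ?_
      split
      · exact hpt i j
      · exact le_rfl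
    have step2 : ∑ i : Fin N, ∑ j : Fin N,
        (if i < j then 2 ^ (t - 2) * (2 - 2 * c i j) else 0)
        = 2 ^ (t-2) * 2 * (((N:ℝ)^2 - N)/2) - 2 ^ (t-2) * 2 * P := by
      have : ∀ i j : Fin N, (if i < j then 2 ^ (t - 2) * (2 - 2 * c i j) else 0)
          = 2 ^ (t-2) * 2 * (if i < j then (1:ℝ) else 0)
            - 2 ^ (t-2) * 2 * (if i < j then c i j else 0) := by
        intro i j; split <;> ring
      simp only [this]
      rw [← count_lt (N := N)]
      simp only [Finset.sum_sub_distrib, ← Finset.mul_sum]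
      rfl
    rw [step2] at step1
    have h2t : (0:ℝ) < 2 ^ (t - 2) := Real.rpow_pos_of_pos two_pos _
    nlinarith [step1, hPge, mul_nonneg h2t.le (by linarith : (0:ℝ) ≤ P + (N:ℝ)/2)]
  -- rewrite the energy sum
  have hsum : ∑ i : Fin N, ∑ j : Fin N, (if i < j then Vpair s ‖q i - q j‖ else 0)
      = (((N:ℝ)^2 - N)/2 - T)/t := by
    have hterm : ∀ i j : Fin N, (if i < j then Vpair s ‖q i - q j‖ else 0)
        = ((if i < j then (1:ℝ) else 0) - (if i < j then ‖q i - q j‖ ^ t else 0))/t := by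
      intro i j
      split
      · rw [Vpair_eq s hs0, ← ht_def]
      · simp
    simp only [hterm]
    simp only [sub_div, Finset.sum_sub_distrib, ← Finset.sum_div]
    rw [count_lt, ← hT]
    ring
  have key : 2/((N:ℝ)*((N:ℝ)-1)) * ((((N:ℝ)^2 - N)/2 - 2 ^ (t-2) * (N:ℝ)^2)/t) ≤ avgE s N q := by
    rw [avgE, hsum]
    have hfrac : (0:ℝ) ≤ 2/((N:ℝ)*((N:ℝ)-1)) := by positivity
    apply mul_le_mul_of_nonneg_left _ hfrac
    gcongr
  refine le_trans (le_of_eq ?_) key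
  have h21 : (2:ℝ) ^ (t-1) = 2 ^ (t-2) * 2 := by
    rw [show t - 1 = (t-2) + 1 by ring, Real.rpow_add two_pos, Real.rpow_one]
  rw [h21]
  have hN1 : (N:ℝ) - 1 ≠ 0 := by linarith
  have hNne : (N:ℝ) ≠ 0 := by linarith
  have htne : t ≠ 0 := ne_of_gt ht0
  field_simp

noncomputable def vpt (x y : ℝ) : EuclideanSpace ℝ (Fin 3) :=
  (WithLp.equiv 2 (Fin 3 → ℝ)).symm ![x, 0, y]

lemma vpt_apply0 (x y : ℝ) : vpt x y 0 = x := rfl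
lemma vpt_apply1 (x y : ℝ) : vpt x y 1 = 0 := rfl
lemma vpt_apply2 (x y : ℝ) : vpt x y 2 = y := rfl

lemma norm_vpt (x y : ℝ) (h : x^2 + y^2 = 1) : ‖vpt x y‖ = 1 := by
  rw [EuclideanSpace.norm_eq]
  rw [Fin.sum_univ_three]
  rw [vpt_apply0, vpt_apply1, vpt_apply2]
  simp only [Real.norm_eq_abs, sq_abs]
  rw [show x^2 + (0:ℝ)^2 + y^2 = 1 by simpa using h]
  exact Real.sqrt_one

lemma norm_add_vpt_ge (x y x' y' c : ℝ) (hc : 0 ≤ c) (hy : c ≤ y + y') :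
    c ≤ ‖vpt x y + vpt x' y'‖ := by
  have happly : ∀ i : Fin 3, (vpt x y + vpt x' y') i = vpt x y i + vpt x' y' i :=
    fun i => rfl
  rw [EuclideanSpace.norm_eq, Fin.sum_univ_three]
  simp only [happly, vpt_apply0, vpt_apply1, vpt_apply2, Real.norm_eq_abs, sq_abs]
  have h1 : c^2 ≤ (x + x')^2 + (0 + 0)^2 + (y + y')^2 := by nlinarith
  calc c = Real.sqrt (c^2) := (Real.sqrt_sq hc).symm
    _ ≤ _ := Real.sqrt_le_sqrt h1

lemma Vpair_le_of_ge (s : ℝ) (hs : s < -2) (d r : ℝ) (hd : 0 ≤ d) (hdr : d ≤ r) :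
    Vpair s r ≤ (1 - d ^ (-s)) / (-s) := by
  have hs0 : s ≠ 0 := by linarith
  rw [Vpair_eq s hs0]
  have : d ^ (-s) ≤ r ^ (-s) := Real.rpow_le_rpow hd hdr (by linarith)
  apply div_le_div_of_nonneg_right (by linarith) (by linarith)

lemma config_bound (s : ℝ) (hs : s < -2) (m : ℕ) (hm : 1 ≤ m) (a : ℝ) (ha : 0 < a)
    (ha1 : a < 1) :
    ∃ q : Fin (m+m) → EuclideanSpace ℝ (Fin 3), (∀ i, ‖q i‖ = 1) ∧ Function.Injective q ∧
      avgE s (m+m) q ≤ (1 - 2 ^ (-s - 1) * (m+m) / ((m+m:ℝ) - 1)) / (-s)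
        + (2 ^ (-s) - (2*Real.sqrt (1-a^2)) ^ (-s)) / (-s) := by
  have hs0 : s ≠ 0 := by linarith
  set t : ℝ := -s with ht_def
  have ht : 2 < t := by simp only [ht_def]; linarith
  have ht0 : 0 < t := by linarith
  have hmR : (1:ℝ) ≤ (m:ℝ) := by exact_mod_cast hm
  have hm0 : (0:ℕ) < m := hm
  -- coordinates
  set x : Fin m → ℝ := fun k => a * ((k:ℕ) + 1) / m with hx_def
  have hx_pos : ∀ k, 0 < x k := by
    intro k
    have : (0:ℝ) < ((k:ℕ):ℝ) + 1 := by positivity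
    positivity
  have hx_le : ∀ k, x k ≤ a := by
    intro k
    rw [hx_def]
    rw [div_le_iff₀ (by positivity : (0:ℝ) < (m:ℝ))]
    have hk : ((k:ℕ):ℝ) + 1 ≤ (m:ℝ) := by
      have := k.2
      exact_mod_cast Nat.succ_le_of_lt this
    nlinarith
  have hx_lt1 : ∀ k, x k < 1 := fun k => lt_of_le_of_lt (hx_le k) ha1
  have hx_inj : Function.Injective x := by
    intro k l h
    rw [hx_def] at h
    simp only at h
    field_simp at h
    exact Fin.ext (by exact_mod_cast (by linarith : ((k:ℕ):ℝ) = (l:ℕ)))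
  set y : Fin m → ℝ := fun k => Real.sqrt (1 - (x k)^2) with hy_def
  have hy_pos : ∀ k, 0 < y k := by
    intro k
    apply Real.sqrt_pos.mpr
    nlinarith [hx_pos k, hx_lt1 k]
  have hxy : ∀ k, (x k)^2 + (y k)^2 = 1 := by
    intro k
    rw [hy_def]
    simp only
    rw [Real.sq_sqrt (by nlinarith [hx_pos k, hx_lt1 k])]
    ring
  have hy_ge : ∀ k, Real.sqrt (1 - a^2) ≤ y k := by
    intro k
    apply Real.sqrt_le_sqrt
    nlinarith [hx_le k, hx_pos k]
  -- the configuration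
  set f : Fin m → EuclideanSpace ℝ (Fin 3) := fun k => vpt (x k) (y k) with hf_def
  set q : Fin (m+m) → EuclideanSpace ℝ (Fin 3) :=
    fun i => Sum.elim f (fun k => -f k) (finSumFinEquiv.symm i) with hq_def
  have hqe : ∀ z : Fin m ⊕ Fin m, q (finSumFinEquiv z) = Sum.elim f (fun k => -f k) z := by
    intro z
    rw [hq_def]
    simp [Equiv.symm_apply_apply]
  refine ⟨q, ?_, ?_, ?_⟩
  · -- norms
    intro i
    rw [hq_def]
    simp only
    rcases (finSumFinEquiv.symm i) with k | k
    · exact norm_vpt _ _ (hxy k)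
    · simp only [Sum.elim_inr, norm_neg]
      exact norm_vpt _ _ (hxy k)
  · -- injectivity
    have helim : Function.Injective (Sum.elim f (fun k => -f k)) := by
      have hf_inj : Function.Injective f := by
        intro k l h
        apply hx_inj
        have := congrFun (congrArg (fun (w : EuclideanSpace ℝ (Fin 3)) => (w : Fin 3 → ℝ)) h) 0
        simpa [hf_def, vpt_apply0] using this
      intro z w h
      rcases z with k | k <;> rcases w with l | l
      · simp only [Sum.elim_inl] at h; rw [hf_inj h]
      · exfalso
        simp only [Sum.elim_inl, Sum.elim_inr] at h
        have h2 := congrFun (congrArg (fun (w : EuclideanSpace ℝ (Fin 3)) => (w : Fin 3 → ℝ)) h) 2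
        have : y k = -(y l) := by simpa [hf_def, vpt_apply2] using h2
        nlinarith [hy_pos k, hy_pos l]
      · exfalso
        simp only [Sum.elim_inl, Sum.elim_inr] at h
        have h2 := congrFun (congrArg (fun (w : EuclideanSpace ℝ (Fin 3)) => (w : Fin 3 → ℝ)) h) 2
        have : -(y k) = y l := by simpa [hf_def, vpt_apply2] using h2
        nlinarith [hy_pos k, hy_pos l]
      · simp only [Sum.elim_inr, neg_inj] at h; rw [hf_inj h]
    intro i j h
    have : finSumFinEquiv.symm i = finSumFinEquiv.symm j := helim h
    have := congrArg finSumFinEquiv this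
    simpa using this
  · -- the energy bound
    have h_ll : ∀ k l : Fin m, ((finSumFinEquiv (Sum.inl k) : Fin (m+m))
        < finSumFinEquiv (Sum.inl l)) ↔ k < l := by
      intro k l
      simp only [finSumFinEquiv_apply_left, Fin.lt_def, Fin.coe_castAdd]
    have h_lr : ∀ k l : Fin m, (finSumFinEquiv (Sum.inl k) : Fin (m+m))
        < finSumFinEquiv (Sum.inr l) := by
      intro k l
      have hk := k.2
      simp only [finSumFinEquiv_apply_left, finSumFinEquiv_apply_right, Fin.lt_def,
        Fin.coe_castAdd, Fin.coe_natAdd]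
      omega
    have h_rl : ∀ k l : Fin m, ¬ ((finSumFinEquiv (Sum.inr k) : Fin (m+m))
        < finSumFinEquiv (Sum.inl l)) := by
      intro k l
      have hl := l.2
      simp only [finSumFinEquiv_apply_left, finSumFinEquiv_apply_right, Fin.lt_def,
        Fin.coe_castAdd, Fin.coe_natAdd]
      omega
    have h_rr : ∀ k l : Fin m, ((finSumFinEquiv (Sum.inr k) : Fin (m+m))
        < finSumFinEquiv (Sum.inr l)) ↔ k < l := by
      intro k l
      simp only [finSumFinEquiv_apply_right, Fin.lt_def, Fin.coe_natAdd]
      omega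
    set d : ℝ := 2 * Real.sqrt (1 - a^2) with hd_def
    have hd0 : (0:ℝ) ≤ d := by positivity
    have hdle2 : d ≤ 2 := by
      have h1 : Real.sqrt (1 - a^2) ≤ 1 := by
        have h2 : Real.sqrt (1 - a^2) ≤ Real.sqrt 1 := Real.sqrt_le_sqrt (by nlinarith)
        rwa [Real.sqrt_one] at h2
      rw [hd_def]; linarith
    have hVle : ∀ r : ℝ, 0 ≤ r → Vpair s r ≤ 1 / t := by
      intro r hr
      have := Vpair_le_of_ge s hs 0 r le_rfl hr
      rwa [Real.zero_rpow (by linarith : -s ≠ 0), sub_zero, ← ht_def] at this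
    have hVcross : ∀ k l : Fin m, Vpair s ‖f k - (-(f l))‖ ≤ (1 - d ^ t) / t := by
      intro k l
      rw [sub_neg_eq_add]
      have hge : d ≤ ‖f k + f l‖ := by
        rw [hf_def]
        apply norm_add_vpt_ge _ _ _ _ _ hd0
        have := hy_ge k
        have := hy_ge l
        rw [hd_def]; linarith
      have := Vpair_le_of_ge s hs d _ hd0 hge
      rwa [← ht_def] at this
    -- reindexing the double sum
    have reindex : ∀ (F : Fin (m+m) → Fin (m+m) → ℝ),
        (∑ i, ∑ j, F i j)
        = ((∑ k : Fin m, ∑ l : Fin m, F (finSumFinEquiv (.inl k)) (finSumFinEquiv (.inl l)))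
        + (∑ k : Fin m, ∑ l : Fin m, F (finSumFinEquiv (.inl k)) (finSumFinEquiv (.inr l))))
        + ((∑ k : Fin m, ∑ l : Fin m, F (finSumFinEquiv (.inr k)) (finSumFinEquiv (.inl l)))
        + (∑ k : Fin m, ∑ l : Fin m, F (finSumFinEquiv (.inr k)) (finSumFinEquiv (.inr l)))) := by
      intro F
      rw [← Equiv.sum_comp finSumFinEquiv (fun i => ∑ j, F i j), Fintype.sum_sum_type]
      have inner : ∀ i, ∑ j, F i j = (∑ l : Fin m, F i (finSumFinEquiv (.inl l)))
          + ∑ l : Fin m, F i (finSumFinEquiv (.inr l)) := by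
        intro i
        rw [← Equiv.sum_comp finSumFinEquiv (fun j => F i j), Fintype.sum_sum_type]
      simp only [inner, Finset.sum_add_distrib]
    rw [avgE, reindex]
    -- bound the four blocks
    have hcount : ∑ k : Fin m, ∑ l : Fin m, (if k < l then (1:ℝ)/t else 0)
        = (((m:ℝ)^2 - m)/2) / t := by
      have : ∀ k l : Fin m, (if k < l then (1:ℝ)/t else 0) = (if k < l then (1:ℝ) else 0)/t := by
        intro k l; split <;> simp
      simp only [this, ← Finset.sum_div, count_lt]
    have block1 : ∑ k : Fin m, ∑ l : Fin m,
        (if (finSumFinEquiv (Sum.inl k) : Fin (m+m)) < finSumFinEquiv (Sum.inl l) then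
          Vpair s ‖q (finSumFinEquiv (Sum.inl k)) - q (finSumFinEquiv (Sum.inl l))‖ else 0)
        ≤ (((m:ℝ)^2 - m)/2) / t := by
      rw [← hcount]
      refine Finset.sum_le_sum fun k _ => Finset.sum_le_sum fun l _ => ?_
      rw [if_congr (h_ll k l) rfl rfl]
      split
      · exact hVle _ (norm_nonneg _)
      · exact le_rfl
    have block4 : ∑ k : Fin m, ∑ l : Fin m,
        (if (finSumFinEquiv (Sum.inr k) : Fin (m+m)) < finSumFinEquiv (Sum.inr l) then
          Vpair s ‖q (finSumFinEquiv (Sum.inr k)) - q (finSumFinEquiv (Sum.inr l))‖ else 0)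
        ≤ (((m:ℝ)^2 - m)/2) / t := by
      rw [← hcount]
      refine Finset.sum_le_sum fun k _ => Finset.sum_le_sum fun l _ => ?_
      rw [if_congr (h_rr k l) rfl rfl]
      split
      · exact hVle _ (norm_nonneg _)
      · exact le_rfl
    have block3 : ∑ k : Fin m, ∑ l : Fin m,
        (if (finSumFinEquiv (Sum.inr k) : Fin (m+m)) < finSumFinEquiv (Sum.inl l) then
          Vpair s ‖q (finSumFinEquiv (Sum.inr k)) - q (finSumFinEquiv (Sum.inl l))‖ else 0)
        = 0 := by
      refine Finset.sum_eq_zero fun k _ => Finset.sum_eq_zero fun l _ => ?_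
      rw [if_neg (h_rl k l)]
    have block2 : ∑ k : Fin m, ∑ l : Fin m,
        (if (finSumFinEquiv (Sum.inl k) : Fin (m+m)) < finSumFinEquiv (Sum.inr l) then
          Vpair s ‖q (finSumFinEquiv (Sum.inl k)) - q (finSumFinEquiv (Sum.inr l))‖ else 0)
        ≤ (m:ℝ)^2 * ((1 - d ^ t) / t) := by
      have hb : ∀ k l : Fin m,
          (if (finSumFinEquiv (Sum.inl k) : Fin (m+m)) < finSumFinEquiv (Sum.inr l) then
            Vpair s ‖q (finSumFinEquiv (Sum.inl k)) - q (finSumFinEquiv (Sum.inr l))‖ else 0)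
          ≤ (1 - d ^ t) / t := by
        intro k l
        rw [if_pos (h_lr k l), hqe, hqe]
        simpa using hVcross k l
      calc _ ≤ ∑ k : Fin m, ∑ l : Fin m, (1 - d ^ t) / t :=
            Finset.sum_le_sum fun k _ => Finset.sum_le_sum fun l _ => hb k l
        _ = (m:ℝ)^2 * ((1 - d ^ t) / t) := by
            simp [Finset.sum_const, Finset.card_univ, mul_assoc]
            ring
    -- combine
    have hMpos : (0:ℝ) < ((m+m:ℕ):ℝ) * (((m+m:ℕ):ℝ) - 1) := by
      push_cast
      nlinarith
    have htotal : ((∑ k : Fin m, ∑ l : Fin m,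
        (if (finSumFinEquiv (Sum.inl k) : Fin (m+m)) < finSumFinEquiv (Sum.inl l) then
          Vpair s ‖q (finSumFinEquiv (Sum.inl k)) - q (finSumFinEquiv (Sum.inl l))‖ else 0))
        + (∑ k : Fin m, ∑ l : Fin m,
        (if (finSumFinEquiv (Sum.inl k) : Fin (m+m)) < finSumFinEquiv (Sum.inr l) then
          Vpair s ‖q (finSumFinEquiv (Sum.inl k)) - q (finSumFinEquiv (Sum.inr l))‖ else 0)))
        + ((∑ k : Fin m, ∑ l : Fin m,
        (if (finSumFinEquiv (Sum.inr k) : Fin (m+m)) < finSumFinEquiv (Sum.inl l) then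
          Vpair s ‖q (finSumFinEquiv (Sum.inr k)) - q (finSumFinEquiv (Sum.inl l))‖ else 0))
        + (∑ k : Fin m, ∑ l : Fin m,
        (if (finSumFinEquiv (Sum.inr k) : Fin (m+m)) < finSumFinEquiv (Sum.inr l) then
          Vpair s ‖q (finSumFinEquiv (Sum.inr k)) - q (finSumFinEquiv (Sum.inr l))‖ else 0)))
        ≤ (((m:ℝ)^2 - m)/2) / t + (m:ℝ)^2 * ((1 - d ^ t) / t) + (((m:ℝ)^2 - m)/2) / t := by
      rw [block3]
      linarith [block1, block2, block4]
    calc 2 / (((m+m:ℕ):ℝ) * (((m+m:ℕ):ℝ) - 1)) * _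
        ≤ 2 / (((m+m:ℕ):ℝ) * (((m+m:ℕ):ℝ) - 1))
          * ((((m:ℝ)^2 - m)/2) / t + (m:ℝ)^2 * ((1 - d ^ t) / t) + (((m:ℝ)^2 - m)/2) / t) :=
          mul_le_mul_of_nonneg_left htotal (div_nonneg (by norm_num) hMpos.le)
      _ ≤ (1 - 2 ^ (t - 1) * ((m+m:ℕ):ℝ) / (((m+m:ℕ):ℝ) - 1)) / t + (2 ^ t - d ^ t) / t := by
          have hw : d ^ t ≤ 2 ^ t := Real.rpow_le_rpow hd0 hdle2 (by linarith)
          have hw0 : (0:ℝ) ≤ d ^ t := Real.rpow_nonneg hd0 _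
          have h2t1 : (2:ℝ) ^ t = 2 * 2 ^ (t - 1) := by
            rw [show t = 1 + (t - 1) by ring, Real.rpow_add two_pos, Real.rpow_one,
              show (1:ℝ) + (t-1) - 1 = t - 1 by ring]
          set c2 : ℝ := (2:ℝ) ^ (t-1) with hc2
          have hc2pos : (0:ℝ) < c2 := Real.rpow_pos_of_pos two_pos _
          set w : ℝ := d ^ t with hw_def
          push_cast
          rw [h2t1]
          have hμ1 : (0:ℝ) < 2*(m:ℝ) - 1 := by linarith
          have hμμ : ((m:ℝ) + m) ≠ 0 := by positivity
          have hμμ1 : ((m:ℝ) + m - 1) ≠ 0 := by nlinarith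
          have htne : t ≠ 0 := ne_of_gt ht0
          have hA : 2 / (((m:ℝ) + m) * ((m:ℝ) + m - 1))
              * ((((m:ℝ)^2 - m)/2) / t + (m:ℝ)^2 * ((1 - w) / t) + (((m:ℝ)^2 - m)/2) / t)
              = (2*(m:ℝ) - 1 - (m:ℝ)*w) / ((2*(m:ℝ) - 1) * t) := by
            rw [div_mul_eq_mul_div, div_eq_div_iff (by positivity) (by positivity)]
            field_simp
            ring
          rw [hA]
          have hBeq : (1 - c2 * ((m:ℝ) + m) / ((m:ℝ) + m - 1)) / t + (2 * c2 - w) / t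
              = ((2*(m:ℝ) - 1) - c2*(2*(m:ℝ)) + (2*c2 - w) * (2*(m:ℝ) - 1))
                / ((2*(m:ℝ) - 1) * t) := by
            rw [one_sub_div hμμ1, div_div, div_add_div _ _ (mul_ne_zero hμμ1 htne) htne, div_eq_div_iff (by positivity) (by positivity)]
            ring
          rw [hBeq, div_le_div_iff_of_pos_right (mul_pos hμ1 ht0)]
          nlinarith [mul_nonneg (by linarith : (0:ℝ) ≤ 2*c2 - w)
              (by linarith : (0:ℝ) ≤ (m:ℝ) - 1)]
      _ = (1 - 2 ^ (t - 1) * ((m:ℝ) + (m:ℝ)) / (((m:ℝ) + (m:ℝ)) - 1)) / t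
          + (2 ^ t - d ^ t) / t := by push_cast; ring

lemma vmin_nonempty_bdd (s : ℝ) (hs : s < -2) (m : ℕ) (hm : 1 ≤ m) :
    ({ E : ℝ | ∃ q : Fin (m+m) → EuclideanSpace ℝ (Fin 3),
      (∀ i, ‖q i‖ = 1) ∧ Function.Injective q ∧ E = avgE s (m+m) q }).Nonempty ∧
    BddBelow { E : ℝ | ∃ q : Fin (m+m) → EuclideanSpace ℝ (Fin 3),
      (∀ i, ‖q i‖ = 1) ∧ Function.Injective q ∧ E = avgE s (m+m) q } := by
  constructor
  · obtain ⟨q, hn, hi, -⟩ := config_bound s hs m hm (1/2) (by norm_num) (by norm_num)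
    exact ⟨avgE s (m+m) q, q, hn, hi, rfl⟩
  · refine ⟨(1 - 2 ^ (-s - 1) * ((m:ℝ)+(m:ℝ)) / (((m:ℝ)+(m:ℝ)) - 1)) / (-s), ?_⟩
    rintro x ⟨q, hn, hi, rfl⟩
    have h := avgE_lower s hs (m+m) (by omega) q hn
    push_cast at h ⊢
    linarith

lemma vmin_lower (s : ℝ) (hs : s < -2) (m : ℕ) (hm : 1 ≤ m) :
    (1 - 2 ^ (-s - 1) * (m+m) / ((m+m:ℝ) - 1)) / (-s) ≤ vmin s (m+m) := by
  obtain ⟨hne, -⟩ := vmin_nonempty_bdd s hs m hm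
  refine le_csInf hne ?_
  rintro x ⟨q, hn, hi, rfl⟩
  have := avgE_lower s hs (m+m) (by omega) q hn
  push_cast at this ⊢
  linarith

lemma vmin_upper (s : ℝ) (hs : s < -2) (m : ℕ) (hm : 1 ≤ m) :
    vmin s (m+m) ≤ (1 - 2 ^ (-s - 1) * (m+m) / ((m+m:ℝ) - 1)) / (-s) := by
  obtain ⟨hne, hbdd⟩ := vmin_nonempty_bdd s hs m hm
  rw [vmin, Real.sInf_le_iff hbdd hne]
  intro ε hε
  -- continuity to choose a
  set F : ℝ → ℝ := fun a => (2 ^ (-s) - (2*Real.sqrt (1-a^2)) ^ (-s)) / (-s) with hF_def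
  have hcont : ContinuousAt F 0 := by
    apply ContinuousAt.div_const
    apply ContinuousAt.sub continuousAt_const
    apply ContinuousAt.rpow_const
    · exact (continuous_const.mul ((continuous_const.sub
        (continuous_pow 2)).sqrt)).continuousAt
    · right; linarith
  have hF0 : F 0 = 0 := by
    simp only [hF_def]
    norm_num
  have hev1 : ∀ᶠ a in nhds (0:ℝ), F a < ε := by
    have := hcont.tendsto
    rw [hF0] at this
    exact this.eventually_lt_const hε
  have hev2 : ∀ᶠ a in nhds (0:ℝ), |a - 0| < 1 := eventually_abs_sub_lt 0 one_pos
  obtain ⟨δ, hδ, hball⟩ := Metric.eventually_nhds_iff.mp (hev1.and hev2)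
  set a : ℝ := min (δ/2) (1/2) with ha_def
  have ha0 : 0 < a := by positivity
  have hadist : dist a 0 < δ := by
    rw [Real.dist_eq, sub_zero, abs_of_pos ha0]
    calc a ≤ δ/2 := min_le_left _ _
      _ < δ := by linarith
  obtain ⟨hFa, haabs⟩ := hball hadist
  have ha1 : a < 1 := by
    rw [sub_zero, abs_of_pos ha0] at haabs
    exact haabs
  obtain ⟨q, hn, hi, hb⟩ := config_bound s hs m hm a ha0 ha1
  refine ⟨avgE s (m+m) q, ⟨q, hn, hi, rfl⟩, ?_⟩
  calc avgE s (m+m) q ≤ (1 - 2 ^ (-s - 1) * (m+m) / ((m+m:ℝ) - 1)) / (-s) + F a := hb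
    _ < _ := by linarith

theorem stmt8 (s : ℝ) (hs : s < -2) (n : ℕ) (hn : 2 ≤ n) :
    vmin s (2 * (n - 1)) - 2 * vmin s (2 * n) + vmin s (2 * (n + 1)) < 0 := by
  have e1 : 2 * (n - 1) = (n-1) + (n-1) := two_mul _
  have e2 : 2 * n = n + n := two_mul _
  have e3 : 2 * (n + 1) = (n+1) + (n+1) := two_mul _
  rw [e1, e2, e3]
  have h1 := vmin_upper s hs (n-1) (by omega)
  have h2 := vmin_lower s hs n (by omega)
  have h3 := vmin_upper s hs (n+1) (by omega)
  have hc : (0:ℝ) < 2 ^ (-s - 1) := Real.rpow_pos_of_pos two_pos _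
  have hX : (2:ℝ) ≤ (n:ℝ) := by exact_mod_cast hn
  have hcast : ((n-1:ℕ):ℝ) = (n:ℝ) - 1 := by
    push_cast [Nat.cast_sub (by omega : 1 ≤ n)]
    ring
  push_cast [hcast] at h1
  push_cast at h2 h3
  set c : ℝ := 2 ^ (-s - 1) with hc_def
  set t : ℝ := -s with ht_def
  have ht0 : (0:ℝ) < t := by simp only [ht_def]; linarith
  set X : ℝ := (n:ℝ) with hX_def
  have hD1 : (0:ℝ) < 2*X - 3 := by linarith
  have hD2 : (0:ℝ) < 2*X - 1 := by linarith
  have hD3 : (0:ℝ) < 2*X + 1 := by linarith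
  have heq : (1 - c * (X - 1 + (X - 1)) / (X - 1 + (X - 1) - 1)) / t
      - 2 * ((1 - c * (X + X) / (X + X - 1)) / t)
      + (1 - c * (X + 1 + (X + 1)) / (X + 1 + (X + 1) - 1)) / t
      = -(8*c) / (t * ((2*X-3) * ((2*X-1) * (2*X+1)))) := by
    have e1 : (2*X-3) ≠ 0 := ne_of_gt hD1
    have e2 : (2*X-1) ≠ 0 := ne_of_gt hD2
    have e3 : (2*X+1) ≠ 0 := ne_of_gt hD3
    have e4 : t ≠ 0 := ne_of_gt ht0
    have e5 : X - 1 + (X - 1) - 1 = 2*X - 3 := by ring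
    have e6 : X + X - 1 = 2*X - 1 := by ring
    have e7 : X + 1 + (X + 1) - 1 = 2*X + 1 := by ring
    rw [e5, e6, e7]
    rw [one_sub_div e1, one_sub_div e2, one_sub_div e3]
    field_simp
    ring
  have hlt : -(8*c) / (t * ((2*X-3) * ((2*X-1) * (2*X+1)))) < 0 := by
    apply div_neg_of_neg_of_pos (by linarith)
    positivity
  linarith [h1, h2, h3, heq.symm ▸ hlt]
end
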